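/- arXiv:2510.01838 — 7 statements merged into one kernel-verified Lean document; each statement's English description precedes it below -/
import Mathlib

section
/- Let X : ℤ² → ℝ be a random field whose entries are independent and identically distributed with common law μ, and suppose μ has exponential tails, i.e. there exist constants c, C > 0 such that μ(ℝ∖[−x,x]) ≤ C e^{−cx} for all x ≥ 0. Then for every ε > 0 there exists 0 < ℓ₀(ε) < ∞ such that for every ℓ > ℓ₀(ε) and every finite subset A ⊂ ℤ², the probability P(∀u ∈ A, α(u) ≥ ℓ) ≤ ε^{|A|}, where |A| denotes the cardinality of A. -/
open MeasureTheory ProbabilityTheory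
open scoped ENNReal NNReal

/-- The field `α(u) = sup_{r ≥ 1} (X(u + r e₁) - X(u)) / r`, valued in `EReal`. -/
noncomputable def alphaE (X : ℤ × ℤ → ℝ) (u : ℤ × ℤ) : EReal :=
  ⨆ (r : ℕ) (_ : 1 ≤ r), (((X (u.1 + (r : ℤ), u.2) - X u) / (r : ℝ) : ℝ) : EReal)

/-- Orthogonal adjacency on `ℤ²`. -/
def orthAdj (u v : ℤ × ℤ) : Prop := |u.1 - v.1| + |u.2 - v.2| = 1

/-- `connIn S u v`: there is an orthogonally connected path from `u` to `v`
using only vertices of `S` (apart possibly from `u` itself if `u = v`). -/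
def connIn (S : Set (ℤ × ℤ)) (u v : ℤ × ℤ) : Prop :=
  Relation.ReflTransGen (fun a b => a ∈ S ∧ b ∈ S ∧ orthAdj a b) u v

/-- `S` presents an infinite orthogonally connected cluster. -/
def hasInfCluster (S : Set (ℤ × ℤ)) : Prop :=
  ∃ u ∈ S, {v | connIn S u v}.Infinite

/- ### Auxiliary definitions -/

open Finset in
/-- The count of "bad signals" at site `v` given value `x` there:
one if `v ∈ A` and `x` is very negative, plus the number of points of `A`
to the left of `v` in the same row for which `x` is a large positive witness. -/
noncomputable def gcount (A : Finset (ℤ × ℤ)) (ℓ : ℝ) (v : ℤ × ℤ) (x : ℝ) : ℕ :=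
  (if v ∈ A ∧ x < -(ℓ/4) then 1 else 0) +
  ∑ a ∈ A, (if a.2 = v.2 ∧ a.1 < v.1 ∧ ((v.1 - a.1 : ℤ) : ℝ) * (ℓ/4) < x then 1 else 0)

/-- The finite window: `A` together with all sites at distance `≤ N` to the right of `A`. -/
noncomputable def Lam (A : Finset (ℤ × ℤ)) (N : ℕ) : Finset (ℤ × ℤ) :=
  A ∪ A.biUnion (fun a => (Finset.Icc 1 N).image (fun r : ℕ => (a.1 + (r : ℤ), a.2)))

/-- Distances from `v` to points of `A` strictly to its left in the same row. -/
noncomputable def distF (A : Finset (ℤ × ℤ)) (v : ℤ × ℤ) : Finset ℕ :=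
  (A.filter (fun a => a.2 = v.2 ∧ a.1 < v.1)).image (fun a => (v.1 - a.1).toNat)

open Classical in
/-- `mfun A v` : `0` if `v ∈ A`, otherwise the minimal distance to an `A`-point on the left
(in the same row), or `0` if there is none. -/
noncomputable def mfun (A : Finset (ℤ × ℤ)) (v : ℤ × ℤ) : ℕ :=
  if v ∈ A then 0 else if h : (distF A v).Nonempty then (distF A v).min' h else 0

lemma mfun_le {A : Finset (ℤ × ℤ)} {v a : ℤ × ℤ} (ha : a ∈ A) (h2 : a.2 = v.2)
    (h1 : a.1 < v.1) : (mfun A v : ℤ) ≤ v.1 - a.1 := by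
  classical
  have hmem : (v.1 - a.1).toNat ∈ distF A v := by
    refine Finset.mem_image.mpr ⟨a, Finset.mem_filter.mpr ⟨ha, h2, h1⟩, rfl⟩
  have hne : (distF A v).Nonempty := ⟨_, hmem⟩
  have htn : ((v.1 - a.1).toNat : ℤ) = v.1 - a.1 := Int.toNat_of_nonneg (by omega)
  by_cases hv : v ∈ A
  · simp only [mfun, if_pos hv]; omega
  · have : mfun A v = (distF A v).min' hne := by
      simp only [mfun, if_neg hv, dif_pos hne]
    rw [this]
    have := Finset.min'_le _ _ hmem
    omega

lemma mfun_mem_of_not_mem {A : Finset (ℤ × ℤ)} {v : ℤ × ℤ} (hv : v ∉ A)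
    (hne : (distF A v).Nonempty) :
    mfun A v ∈ distF A v ∧ 1 ≤ mfun A v := by
  classical
  have hm : mfun A v = (distF A v).min' hne := by
    simp only [mfun, if_neg hv, dif_pos hne]
  constructor
  · rw [hm]; exact Finset.min'_mem _ _
  · rw [hm]
    have := Finset.min'_mem (distF A v) hne
    obtain ⟨a, haf, hae⟩ := Finset.mem_image.mp this
    have h1 := (Finset.mem_filter.mp haf).2.2
    omega

/-- Key tail property: if the count at `v` is at least `k ≥ 1`, then `|x|` is large. -/
lemma gcount_tail {A : Finset (ℤ × ℤ)} {ℓ : ℝ} (hℓ : 0 < ℓ) {v : ℤ × ℤ} {k : ℕ} {x : ℝ}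
    (hk : 1 ≤ k) (hg : k ≤ gcount A ℓ v x) :
    ℓ/8 * ((k : ℝ) + (mfun A v : ℝ)) < |x| := by
  classical
  by_cases hx : v ∈ A ∧ x < -(ℓ/4)
  · -- the negative case; then no positive witnesses, so k = 1 and mfun = 0
    have hm0 : mfun A v = 0 := by simp only [mfun, if_pos hx.1]
    have hφ : ∑ a ∈ A, (if a.2 = v.2 ∧ a.1 < v.1 ∧ ((v.1 - a.1 : ℤ) : ℝ) * (ℓ/4) < x then 1 else 0) = 0 := by
      refine Finset.sum_eq_zero fun a ha => ?_
      rw [if_neg]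
      rintro ⟨-, h1, h3⟩
      have h4 : (1 : ℝ) ≤ ((v.1 - a.1 : ℤ) : ℝ) := by
        have : (1 : ℤ) ≤ v.1 - a.1 := by omega
        exact_mod_cast this
      nlinarith [hx.2]
    have hk1 : k = 1 := by
      have : gcount A ℓ v x ≤ 1 := by
        unfold gcount; rw [hφ]; split <;> simp
      omega
    have : ℓ/8 * ((k : ℝ) + (mfun A v : ℝ)) = ℓ/8 := by
      rw [hk1, hm0]; norm_num
    rw [this]
    have : -x ≤ |x| := neg_le_abs x
    nlinarith [hx.2]
  · -- the positive-witness case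
    have hψ : (if v ∈ A ∧ x < -(ℓ/4) then 1 else 0) = 0 := if_neg hx
    have hφ : k ≤ ∑ a ∈ A, (if a.2 = v.2 ∧ a.1 < v.1 ∧ ((v.1 - a.1 : ℤ) : ℝ) * (ℓ/4) < x then 1 else 0) := by
      unfold gcount at hg; omega
    set F := A.filter (fun a => a.2 = v.2 ∧ a.1 < v.1 ∧ ((v.1 - a.1 : ℤ) : ℝ) * (ℓ/4) < x) with hF
    have hcard : k ≤ F.card := by
      rw [Finset.card_filter]; exact le_trans hφ (le_of_eq rfl)
    set D := F.image (fun a => v.1 - a.1) with hD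
    have hDcard : D.card = F.card := by
      refine Finset.card_image_of_injOn ?_
      intro a haF b hbF hab
      have ha2 := (Finset.mem_filter.mp haF).2.1
      have hb2 := (Finset.mem_filter.mp hbF).2.1
      have hab' : v.1 - a.1 = v.1 - b.1 := hab
      have : a.1 = b.1 := by omega
      exact Prod.ext this (ha2.trans hb2.symm)
    have hne : D.Nonempty := by
      rw [← Finset.card_pos, hDcard]; omega
    set M := D.max' hne with hM
    obtain ⟨astar, hastar, haM⟩ := Finset.mem_image.mp (Finset.max'_mem D hne)
    rw [← hM] at haM
    obtain ⟨hastarA, h2, h1, h3⟩ := Finset.mem_filter.mp hastar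
    -- all elements of D lie in Icc 1 M
    have hsub : D ⊆ Finset.Icc 1 M := by
      intro d hd
      obtain ⟨b, hbF, hbd⟩ := Finset.mem_image.mp hd
      have hb1 := (Finset.mem_filter.mp hbF).2.2.1
      refine Finset.mem_Icc.mpr ⟨by omega, Finset.le_max' _ _ hd⟩
    have hkM : (k : ℤ) ≤ M := by
      have := Finset.card_le_card hsub
      rw [hDcard] at this
      have hIcc : (Finset.Icc (1:ℤ) M).card = M.toNat := by
        rw [Int.card_Icc]; omega
      have hM1 : 1 ≤ M := by
        have := hsub (Finset.max'_mem D hne); exact (Finset.mem_Icc.mp this).1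
      omega
    have hmM : (mfun A v : ℤ) ≤ M := by
      rw [← haM]; exact mfun_le hastarA h2 h1
    -- x > M * ℓ/4
    have hxlarge : (M : ℝ) * (ℓ/4) < x := by rw [← haM]; exact h3
    have hM1 : (1:ℤ) ≤ M := by omega
    have hx0 : 0 < x := by
      have : (1:ℝ) ≤ (M:ℝ) := by exact_mod_cast hM1
      nlinarith
    have hkMr : (k : ℝ) ≤ (M : ℝ) := by exact_mod_cast hkM
    have hmMr : (mfun A v : ℝ) ≤ (M : ℝ) := by exact_mod_cast hmM
    have : ℓ/8 * ((k : ℝ) + (mfun A v : ℝ)) ≤ ℓ/8 * ((M:ℝ) + (M:ℝ)) := by nlinarith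
    calc ℓ/8 * ((k : ℝ) + (mfun A v : ℝ)) ≤ ℓ/8 * ((M:ℝ) + (M:ℝ)) := this
      _ = (M : ℝ) * (ℓ/4) := by ring
      _ < x := hxlarge
      _ ≤ |x| := le_abs_self x

lemma gcount_measurable {A : Finset (ℤ × ℤ)} {ℓ : ℝ} (v : ℤ × ℤ) :
    Measurable fun x : ℝ => gcount A ℓ v x := by
  classical
  unfold gcount
  refine Measurable.add ?_ ?_
  · by_cases hv : v ∈ A
    · simp only [hv, true_and]
      exact Measurable.ite (measurableSet_lt measurable_id measurable_const)
        measurable_const measurable_const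
    · simp only [hv, false_and, if_false]; exact measurable_const
  · refine Finset.measurable_sum _ fun a _ => ?_
    by_cases h : a.2 = v.2 ∧ a.1 < v.1
    · simp only [h.1, h.2, true_and]
      exact Measurable.ite (measurableSet_lt measurable_const measurable_id)
        measurable_const measurable_const
    · have : ∀ x : ℝ, (if a.2 = v.2 ∧ a.1 < v.1 ∧ ((v.1 - a.1 : ℤ) : ℝ) * (ℓ/4) < x then 1 else 0) = 0 := by
        intro x; rw [if_neg]; tauto
      simp only [this]; exact measurable_const

/-- Deterministic covering lemma. -/
lemma cover {A : Finset (ℤ × ℤ)} {ℓ : ℝ} (hℓ : 0 < ℓ) (x : ℤ × ℤ → ℝ)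
    (hx : ∀ u ∈ A, ∃ r : ℕ, 1 ≤ r ∧ ℓ/2 * r < x (u.1 + (r : ℤ), u.2) - x u) :
    ∃ N : ℕ, A.card ≤ ∑ v ∈ Lam A N, gcount A ℓ v (x v) := by
  classical
  choose! f hf1 hf2 using hx
  refine ⟨A.sup f, ?_⟩
  set N := A.sup f with hN
  set A1 := A.filter (fun u => x u < -(ℓ/4)) with hA1
  set A2 := A.filter (fun u => ¬ (x u < -(ℓ/4))) with hA2
  have hAsub : A ⊆ Lam A N := Finset.subset_union_left
  have hcards : A1.card + A2.card = A.card := Finset.card_filter_add_card_filter_not _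
  have hsplit : ∑ v ∈ Lam A N, gcount A ℓ v (x v) =
      (∑ v ∈ Lam A N, if v ∈ A ∧ x v < -(ℓ/4) then 1 else 0) +
      ∑ v ∈ Lam A N, ∑ a ∈ A, (if a.2 = v.2 ∧ a.1 < v.1 ∧ ((v.1 - a.1 : ℤ) : ℝ) * (ℓ/4) < x v then 1 else 0) := by
    unfold gcount
    rw [← Finset.sum_add_distrib]
  have hpart1 : A1.card ≤ ∑ v ∈ Lam A N, if v ∈ A ∧ x v < -(ℓ/4) then 1 else 0 := by
    have h1 : A1.card = ∑ v ∈ A1, (if v ∈ A ∧ x v < -(ℓ/4) then 1 else 0) := by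
      rw [Finset.sum_congr rfl (fun v hv => ?_), Finset.sum_const, smul_eq_mul, mul_one]
      obtain ⟨hvA, hvx⟩ := Finset.mem_filter.mp hv
      rw [if_pos ⟨hvA, hvx⟩]
    rw [h1]
    refine Finset.sum_le_sum_of_subset (fun v hv => hAsub (Finset.mem_filter.mp hv).1)
  have hpart2 : A2.card ≤ ∑ v ∈ Lam A N, ∑ a ∈ A, (if a.2 = v.2 ∧ a.1 < v.1 ∧ ((v.1 - a.1 : ℤ) : ℝ) * (ℓ/4) < x v then 1 else 0) := by
    have hwmem : ∀ u ∈ A2, (u.1 + (f u : ℤ), u.2) ∈ Lam A N := by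
      intro u hu
      have huA := (Finset.mem_filter.mp hu).1
      refine Finset.mem_union_right _ (Finset.mem_biUnion.mpr ⟨u, huA, ?_⟩)
      refine Finset.mem_image.mpr ⟨f u, Finset.mem_Icc.mpr ⟨hf1 u huA, Finset.le_sup huA⟩, rfl⟩
    rw [Finset.card_eq_sum_card_fiberwise hwmem]
    refine Finset.sum_le_sum fun v hv => ?_
    have hsubf : A2.filter (fun u => (u.1 + (f u : ℤ), u.2) = v) ⊆
        A.filter (fun a => a.2 = v.2 ∧ a.1 < v.1 ∧ ((v.1 - a.1 : ℤ) : ℝ) * (ℓ/4) < x v) := by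
      intro u hu
      obtain ⟨hu2, hweq⟩ := Finset.mem_filter.mp hu
      obtain ⟨huA, hux⟩ := Finset.mem_filter.mp hu2
      have h2 : u.2 = v.2 := by rw [← hweq]
      have hfu1 : 1 ≤ f u := hf1 u huA
      have h1 : u.1 < v.1 := by rw [← hweq]; simp; omega
      have hd : v.1 - u.1 = (f u : ℤ) := by rw [← hweq]; simp
      refine Finset.mem_filter.mpr ⟨huA, h2, h1, ?_⟩
      rw [hd]
      push_cast
      have hxv := hf2 u huA
      have hxu : -(ℓ/4) ≤ x u := le_of_not_gt hux
      have hwv : x (u.1 + (f u : ℤ), u.2) = x v := by rw [hweq]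
      rw [hwv] at hxv
      have hfu1r : (1:ℝ) ≤ (f u : ℝ) := by exact_mod_cast hfu1
      nlinarith
    calc (A2.filter (fun u => (u.1 + (f u : ℤ), u.2) = v)).card
        ≤ (A.filter (fun a => a.2 = v.2 ∧ a.1 < v.1 ∧ ((v.1 - a.1 : ℤ) : ℝ) * (ℓ/4) < x v)).card :=
          Finset.card_le_card hsubf
      _ = ∑ a ∈ A, (if a.2 = v.2 ∧ a.1 < v.1 ∧ ((v.1 - a.1 : ℤ) : ℝ) * (ℓ/4) < x v then 1 else 0) :=
          Finset.card_filter _ _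
  omega

/-- Product of lower integrals for an independent family. -/
lemma lintegral_prod_indep {Ω : Type} [MeasurableSpace Ω] (P : Measure Ω) [IsProbabilityMeasure P]
    {ι : Type*} (Z : ι → Ω → ℝ≥0∞) (hZmeas : ∀ i, Measurable (Z i))
    (hZindep : iIndepFun Z P) (s : Finset ι) :
    ∫⁻ ω, ∏ i ∈ s, Z i ω ∂P = ∏ i ∈ s, ∫⁻ ω, Z i ω ∂P := by
  classical
  induction s using Finset.induction with
  | empty => simp
  | insert i s hi ih =>
    rw [Finset.prod_insert hi, ← ih]
    have hindep : IndepFun (Z i) (∏ j ∈ s, Z j) P :=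
      (hZindep.indepFun_finset_prod_of_notMem hZmeas hi).symm
    have hpm : Measurable (∏ j ∈ s, Z j) := by
      have h := Finset.measurable_prod (f := fun j ω => Z j ω) s (fun j _ => hZmeas j)
      have heq2 : (∏ j ∈ s, Z j) = fun ω => ∏ j ∈ s, Z j ω := by
        ext ω; exact Finset.prod_apply ω s Z
      rw [heq2]; exact h
    have heq : ∀ ω, Z i ω * ∏ j ∈ s, Z j ω = Z i ω * (∏ j ∈ s, Z j) ω := by
      intro ω; rw [Finset.prod_apply]
    calc ∫⁻ ω, ∏ j ∈ insert i s, Z j ω ∂P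
        = ∫⁻ ω, Z i ω * (∏ j ∈ s, Z j) ω ∂P := by
          refine lintegral_congr fun ω => ?_
          rw [Finset.prod_insert hi, Finset.prod_apply]
      _ = (∫⁻ ω, Z i ω ∂P) * ∫⁻ ω, (∏ j ∈ s, Z j) ω ∂P :=
          lintegral_mul_eq_lintegral_mul_lintegral_of_indepFun (hZmeas i) hpm hindep
      _ = (∫⁻ ω, Z i ω ∂P) * ∫⁻ ω, ∏ j ∈ s, Z j ω ∂P := by
          congr 1
          exact lintegral_congr fun ω => Finset.prod_apply _ _ _

lemma prod_ofReal_exp {ι : Type*} (s : Finset ι) (t : ι → ℝ) :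
    ∏ i ∈ s, ENNReal.ofReal (Real.exp (t i)) = ENNReal.ofReal (Real.exp (∑ i ∈ s, t i)) := by
  classical
  induction s using Finset.induction with
  | empty => simp
  | insert i s hi ih =>
    rw [Finset.prod_insert hi, Finset.sum_insert hi, ih, Real.exp_add,
      ENNReal.ofReal_mul (Real.exp_nonneg _)]


lemma site_bound {A : Finset (ℤ × ℤ)} {ℓ c C : ℝ} (μ : Measure ℝ) [IsProbabilityMeasure μ]
    (hℓ : 0 < ℓ) (hc : 0 < c) (hC : 0 < C)
    (htail : ∀ x : ℝ, 0 ≤ x → μ {y : ℝ | x < |y|} ≤ ENNReal.ofReal (C * Real.exp (-c * x)))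
    (hq : Real.exp (-(c * ℓ / 16)) ≤ 1/2) (v : ℤ × ℤ) :
    ∫⁻ x, ENNReal.ofReal (Real.exp ((c * ℓ / 16) * (gcount A ℓ v x : ℝ))) ∂μ ≤
      1 + ENNReal.ofReal ((2 * C * Real.exp (-(c * ℓ / 16))) *
        Real.exp (-(c * ℓ / 16) * (mfun A v : ℝ))) := by
  classical
  set θ : ℝ := c * ℓ / 16 with hθdef
  have hθ0 : 0 < θ := by positivity
  set m : ℝ := (mfun A v : ℝ) with hmdef
  have hm0 : 0 ≤ m := Nat.cast_nonneg _
  set T : ℕ → Set ℝ := fun k => {y : ℝ | ℓ/8 * (((k:ℝ)+1) + m) < |y|} with hT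
  have hTmeas : ∀ k, MeasurableSet (T k) := fun k =>
    measurableSet_lt measurable_const measurable_abs
  set r : ℝ≥0∞ := ENNReal.ofReal (Real.exp (-θ)) with hrdef
  have hr : r ≤ 2⁻¹ := by
    rw [hrdef]
    refine le_trans (ENNReal.ofReal_le_ofReal hq) ?_
    rw [one_div, ENNReal.ofReal_inv_of_pos (by norm_num : (0:ℝ) < 2)]
    norm_num
  have hgeo : ∑' k : ℕ, r ^ (k+1) ≤ 2 * r := by
    have hsum : ∑' k : ℕ, r ^ (k+1) = r * (1-r)⁻¹ := by
      simp_rw [pow_succ']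
      rw [ENNReal.tsum_mul_left, ENNReal.tsum_geometric]
    have hinv : (1 - r)⁻¹ ≤ 2 := by
      have h1 : (2 : ℝ≥0∞)⁻¹ ≤ 1 - r := by
        calc (2:ℝ≥0∞)⁻¹ = 1 - 2⁻¹ := ENNReal.one_sub_inv_two.symm
          _ ≤ 1 - r := tsub_le_tsub_left hr 1
      calc (1-r)⁻¹ ≤ ((2:ℝ≥0∞)⁻¹)⁻¹ := ENNReal.inv_le_inv' h1
        _ = 2 := inv_inv _
    rw [hsum]
    calc r * (1-r)⁻¹ ≤ r * 2 := mul_le_mul_right hinv r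
      _ = 2 * r := mul_comm _ _
  have step1 : ∀ x : ℝ, ENNReal.ofReal (Real.exp (θ * (gcount A ℓ v x : ℝ))) ≤
      1 + ∑' k : ℕ, ENNReal.ofReal (Real.exp (θ * ((k:ℝ)+1))) * (T k).indicator 1 x := by
    intro x
    cases hgx : gcount A ℓ v x with
    | zero => simp
    | succ j =>
      have hxT : x ∈ T j := by
        have h := gcount_tail (A := A) hℓ (v := v) (k := j+1) (x := x)
          (Nat.le_add_left 1 j) (le_of_eq hgx.symm)
        simp only [hT, Set.mem_setOf_eq]
        push_cast at h ⊢
        convert h using 3 <;> ring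
      calc ENNReal.ofReal (Real.exp (θ * ((j+1 : ℕ) : ℝ)))
          = ENNReal.ofReal (Real.exp (θ * ((j:ℝ)+1))) * (T j).indicator 1 x := by
            rw [Set.indicator_of_mem hxT, Pi.one_apply, mul_one]
            push_cast; ring_nf
        _ ≤ ∑' k : ℕ, ENNReal.ofReal (Real.exp (θ * ((k:ℝ)+1))) * (T k).indicator 1 x :=
            ENNReal.le_tsum j
        _ ≤ 1 + ∑' k : ℕ, ENNReal.ofReal (Real.exp (θ * ((k:ℝ)+1))) * (T k).indicator 1 x :=
            le_add_self
  calc ∫⁻ x, ENNReal.ofReal (Real.exp (θ * (gcount A ℓ v x : ℝ))) ∂μ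
      ≤ ∫⁻ x, (1 + ∑' k : ℕ, ENNReal.ofReal (Real.exp (θ * ((k:ℝ)+1))) * (T k).indicator 1 x) ∂μ :=
        lintegral_mono step1
    _ = ∫⁻ _, (1:ℝ≥0∞) ∂μ + ∫⁻ x, ∑' k : ℕ, ENNReal.ofReal (Real.exp (θ * ((k:ℝ)+1))) * (T k).indicator 1 x ∂μ :=
        lintegral_add_left measurable_const _
    _ = 1 + ∑' k : ℕ, ENNReal.ofReal (Real.exp (θ * ((k:ℝ)+1))) * μ (T k) := by
        rw [lintegral_one, measure_univ]
        congr 1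
        have htsum := lintegral_tsum (μ := μ)
          (f := fun (k : ℕ) (x : ℝ) => ENNReal.ofReal (Real.exp (θ * ((k:ℝ)+1))) * (T k).indicator 1 x)
          (fun k => ((measurable_one.indicator (hTmeas k)).const_mul _).aemeasurable)
        rw [htsum]
        refine tsum_congr fun k => ?_
        rw [lintegral_const_mul _ (measurable_one.indicator (hTmeas k)),
          lintegral_indicator_one (hTmeas k)]
    _ ≤ 1 + ∑' k : ℕ, ENNReal.ofReal (C * Real.exp (-θ * m)) * r ^ (k+1) := by
        refine add_le_add_right (ENNReal.tsum_le_tsum fun k => ?_) 1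
        have ht0 : (0:ℝ) ≤ ℓ/8 * (((k:ℝ)+1) + m) := by positivity
        refine le_trans (mul_le_mul_right (htail _ ht0) _) ?_
        rw [hrdef, ← ENNReal.ofReal_pow (Real.exp_nonneg _),
          ← ENNReal.ofReal_mul (by positivity), ← ENNReal.ofReal_mul (by positivity)]
        refine ENNReal.ofReal_le_ofReal ?_
        have e1 : Real.exp (θ * ((k:ℝ)+1)) * (C * Real.exp (-c * (ℓ/8 * (((k:ℝ)+1) + m)))) =
            C * Real.exp (θ * ((k:ℝ)+1) + -c * (ℓ/8 * (((k:ℝ)+1) + m))) := by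
          rw [Real.exp_add]; ring
        have e2 : C * Real.exp (-θ * m) * Real.exp (-θ) ^ (k+1) =
            C * Real.exp (-θ * m + ((k+1 : ℕ) : ℝ) * (-θ)) := by
          rw [Real.exp_add, ← Real.exp_nat_mul]; ring
        rw [e1, e2]
        refine mul_le_mul_of_nonneg_left (Real.exp_le_exp.mpr ?_) hC.le
        have h2θ : c * (ℓ/8 * (((k:ℝ)+1) + m)) = 2*θ*(((k:ℝ)+1) + m) := by
          rw [hθdef]; ring
        push_cast
        nlinarith [mul_nonneg hθ0.le hm0]
    _ = 1 + ENNReal.ofReal (C * Real.exp (-θ * m)) * ∑' k : ℕ, r ^ (k+1) := by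
        rw [ENNReal.tsum_mul_left]
    _ ≤ 1 + ENNReal.ofReal (C * Real.exp (-θ * m)) * (2 * r) :=
        add_le_add_right (mul_le_mul_right hgeo _) 1
    _ = 1 + ENNReal.ofReal ((2 * C * Real.exp (-θ)) * Real.exp (-θ * m)) := by
        congr 1
        rw [hrdef, ← ENNReal.ofReal_ofNat, ← ENNReal.ofReal_mul (by norm_num),
          ← ENNReal.ofReal_mul (by positivity)]
        congr 1; ring

lemma msum_bound {A : Finset (ℤ × ℤ)} (N : ℕ) {θ : ℝ} (hq : Real.exp (-θ) ≤ 1/2) :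
    ∑ v ∈ Lam A N, Real.exp (-θ * (mfun A v : ℝ)) ≤ 2 * A.card := by
  classical
  set q : ℝ := Real.exp (-θ) with hqdef
  have hq0 : 0 ≤ q := Real.exp_nonneg _
  rw [← Finset.sum_filter_add_sum_filter_not (Lam A N) (· ∈ A)]
  have hpart1 : ∑ v ∈ (Lam A N).filter (· ∈ A), Real.exp (-θ * (mfun A v : ℝ)) ≤ (A.card : ℝ) := by
    have e1 : ∀ v ∈ (Lam A N).filter (· ∈ A), Real.exp (-θ * (mfun A v : ℝ)) = 1 := by
      intro v hv
      have hvA : v ∈ A := (Finset.mem_filter.mp hv).2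
      have : mfun A v = 0 := by simp [mfun, hvA]
      rw [this]; simp
    rw [Finset.sum_congr rfl e1, Finset.sum_const, nsmul_eq_mul, mul_one]
    have : ((Lam A N).filter (· ∈ A)).card ≤ A.card :=
      Finset.card_le_card (fun v hv => (Finset.mem_filter.mp hv).2)
    exact_mod_cast this
  have hpart2 : ∑ v ∈ (Lam A N).filter (· ∉ A), Real.exp (-θ * (mfun A v : ℝ)) ≤ (A.card : ℝ) := by
    set T := (Lam A N).filter (· ∉ A) with hTdef
    -- basic facts about v ∈ T
    have hfacts : ∀ v ∈ T, ((v.1 - (mfun A v : ℤ), v.2) ∈ A ∧ 1 ≤ mfun A v ∧ mfun A v ≤ N) := by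
      intro v hv
      obtain ⟨hvL, hvA⟩ := Finset.mem_filter.mp hv
      have hvB : v ∈ A.biUnion (fun a => (Finset.Icc 1 N).image (fun r : ℕ => (a.1 + (r : ℤ), a.2))) := by
        rcases Finset.mem_union.mp hvL with h | h
        · exact absurd h hvA
        · exact h
      obtain ⟨a, haA, hmem⟩ := Finset.mem_biUnion.mp hvB
      obtain ⟨rr, hrr, hveq⟩ := Finset.mem_image.mp hmem
      obtain ⟨hrr1, hrrN⟩ := Finset.mem_Icc.mp hrr
      have ha2 : a.2 = v.2 := by rw [← hveq]
      have ha1 : a.1 < v.1 := by rw [← hveq]; simp; omega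
      have hd : v.1 - a.1 = (rr : ℤ) := by rw [← hveq]; simp
      have hamem : (v.1 - a.1).toNat ∈ distF A v :=
        Finset.mem_image.mpr ⟨a, Finset.mem_filter.mpr ⟨haA, ha2, ha1⟩, rfl⟩
      have hne : (distF A v).Nonempty := ⟨_, hamem⟩
      obtain ⟨hmmem, h1m⟩ := mfun_mem_of_not_mem hvA hne
      have hmN : mfun A v ≤ N := by
        have hminle : mfun A v ≤ (v.1 - a.1).toNat := by
          have : mfun A v = (distF A v).min' hne := by
            simp only [mfun, if_neg hvA, dif_pos hne]
          rw [this]; exact Finset.min'_le _ _ hamem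
        omega
      obtain ⟨b, hbf, hbe⟩ := Finset.mem_image.mp hmmem
      obtain ⟨hbA, hb2, hb1⟩ := Finset.mem_filter.mp hbf
      have hbeq : (v.1 - (mfun A v : ℤ), v.2) = b := by
        refine Prod.ext ?_ hb2.symm
        simp only
        omega
      exact ⟨hbeq ▸ hbA, h1m, hmN⟩
    have hrw : ∀ v ∈ T, Real.exp (-θ * (mfun A v : ℝ)) = q ^ (mfun A v) := by
      intro v _
      rw [hqdef, ← Real.exp_nat_mul]
      congr 1; ring
    rw [Finset.sum_congr rfl hrw]
    have hinj : ∀ v ∈ T, ∀ w ∈ T, (((v.1 - (mfun A v : ℤ), v.2), mfun A v) : (ℤ × ℤ) × ℕ) =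
        ((w.1 - (mfun A w : ℤ), w.2), mfun A w) → v = w := by
      intro v _ w _ h
      have h1 : v.1 - (mfun A v : ℤ) = w.1 - (mfun A w : ℤ) := congrArg (fun p => p.1.1) h
      have h2 : v.2 = w.2 := congrArg (fun p => p.1.2) h
      have h3 : mfun A v = mfun A w := congrArg (fun p => p.2) h
      refine Prod.ext ?_ h2
      omega
    have himg : ∑ v ∈ T, q ^ (mfun A v) =
        ∑ p ∈ T.image (fun v => (((v.1 - (mfun A v : ℤ), v.2), mfun A v) : (ℤ × ℤ) × ℕ)), q ^ p.2 :=
      (Finset.sum_image (f := fun p : (ℤ × ℤ) × ℕ => q ^ p.2)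
        (g := fun v => (((v.1 - (mfun A v : ℤ), v.2), mfun A v) : (ℤ × ℤ) × ℕ)) hinj).symm
    rw [himg]
    have hsub : T.image (fun v => (((v.1 - (mfun A v : ℤ), v.2), mfun A v) : (ℤ × ℤ) × ℕ)) ⊆
        A ×ˢ Finset.Icc 1 N := by
      intro p hp
      obtain ⟨v, hvT, hpe⟩ := Finset.mem_image.mp hp
      obtain ⟨hA1, h1m, hmN⟩ := hfacts v hvT
      rw [← hpe]
      exact Finset.mem_product.mpr ⟨hA1, Finset.mem_Icc.mpr ⟨h1m, hmN⟩⟩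
    refine le_trans (Finset.sum_le_sum_of_subset_of_nonneg hsub
      (fun p _ _ => pow_nonneg hq0 _)) ?_
    rw [Finset.sum_product]
    have hS : ∑ d ∈ Finset.Icc 1 N, q ^ d ≤ 1 := by
      have hmap : ∑ d ∈ Finset.Icc 1 N, q ^ d = ∑ k ∈ Finset.range N, q ^ (k+1) := by
        refine Finset.sum_nbij' (i := fun d => d - 1) (j := fun k => k + 1) ?_ ?_ ?_ ?_ ?_
        · intro d hd
          obtain ⟨h1, h2⟩ := Finset.mem_Icc.mp hd
          exact Finset.mem_range.mpr (by omega)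
        · intro k hk
          have hk' := Finset.mem_range.mp hk
          exact Finset.mem_Icc.mpr ⟨by omega, by omega⟩
        · intro d hd
          obtain ⟨h1, h2⟩ := Finset.mem_Icc.mp hd
          omega
        · intro k hk
          omega
        · intro d hd
          obtain ⟨h1, h2⟩ := Finset.mem_Icc.mp hd
          congr 1
          omega
      rw [hmap]
      have e2 : ∑ k ∈ Finset.range N, q ^ (k+1) = q * ∑ k ∈ Finset.range N, q ^ k := by
        rw [Finset.mul_sum]
        exact Finset.sum_congr rfl fun k _ => pow_succ' q k
      rw [e2]
      have hgs : ∑ k ∈ Finset.range N, q ^ k ≤ 2 := by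
        refine le_trans (Finset.sum_le_sum fun k _ => pow_le_pow_left₀ hq0 hq k) ?_
        exact sum_geometric_two_le N
      have hgs0 : (0:ℝ) ≤ ∑ k ∈ Finset.range N, q ^ k :=
        Finset.sum_nonneg fun k _ => pow_nonneg hq0 k
      calc q * ∑ k ∈ Finset.range N, q ^ k ≤ (1/2) * 2 :=
            mul_le_mul hq hgs hgs0 (by norm_num)
        _ = 1 := by norm_num
    refine le_trans (Finset.sum_le_card_nsmul _ _ 1 (fun a _ => hS)) ?_
    simp
  push_cast
  linarith
theorem statement2
    {Ω : Type} [MeasurableSpace Ω] (P : Measure Ω) [IsProbabilityMeasure P]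
    (X : ℤ × ℤ → Ω → ℝ) (μ : Measure ℝ) [IsProbabilityMeasure μ]
    (hmeas : ∀ u, Measurable (X u))
    (hindep : iIndepFun X P)
    (hlaw : ∀ u, Measure.map (X u) P = μ)
    (htail : ∃ c C : ℝ, 0 < c ∧ 0 < C ∧ ∀ x : ℝ, 0 ≤ x →
      μ {y : ℝ | x < |y|} ≤ ENNReal.ofReal (C * Real.exp (-c * x))) :
    ∀ ε : ℝ, 0 < ε → ∃ ℓ₀ : ℝ, 0 < ℓ₀ ∧ ∀ ℓ : ℝ, ℓ₀ < ℓ →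
      ∀ A : Finset (ℤ × ℤ),
        P {ω | ∀ u ∈ A, (ℓ : EReal) ≤ alphaE (fun v => X v ω) u} ≤
          ENNReal.ofReal (ε ^ A.card) := by
  classical
  obtain ⟨c, C, hc, hC, htail⟩ := htail
  intro ε hε
  have hKpos : (0:ℝ) < 1 + |Real.log (2*C)| + |2 - Real.log ε| := by positivity
  refine ⟨16 * (1 + |Real.log (2*C)| + |2 - Real.log ε|) / c, by positivity, ?_⟩
  intro ℓ hℓ A
  set K : ℝ := 1 + |Real.log (2*C)| + |2 - Real.log ε| with hK
  have hK1 : 1 ≤ K := by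
    have h1 := abs_nonneg (Real.log (2*C))
    have h2 := abs_nonneg (2 - Real.log ε)
    rw [hK]; linarith
  have hKθ : K < c * ℓ / 16 := by
    rw [div_lt_iff₀ hc] at hℓ
    rw [lt_div_iff₀ (by norm_num : (0:ℝ) < 16)]
    linarith
  set θ : ℝ := c * ℓ / 16 with hθdef
  have hθ1 : 1 < θ := lt_of_le_of_lt hK1 hKθ
  have hθ0 : 0 < θ := by linarith
  have hℓ0 : 0 < ℓ := by nlinarith
  have hq : Real.exp (-θ) ≤ 1/2 := by
    have hlog2 : Real.log 2 < 1 := by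
      have := Real.log_two_lt_d9
      linarith
    calc Real.exp (-θ) ≤ Real.exp (-(Real.log 2)) :=
          Real.exp_le_exp.mpr (by linarith)
      _ = 1/2 := by
          rw [Real.exp_neg, Real.exp_log (by norm_num : (0:ℝ) < 2)]
          norm_num
  have h2C : 2 * C * Real.exp (-θ) ≤ 1 := by
    have h2C0 : (0:ℝ) < 2*C := by linarith
    have hlog : Real.log (2*C) ≤ θ := by
      have := le_abs_self (Real.log (2*C))
      have h2 := abs_nonneg (2 - Real.log ε)
      rw [hK] at hKθ
      linarith
    calc 2*C*Real.exp (-θ) ≤ 2*C*Real.exp (-(Real.log (2*C))) := by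
          refine mul_le_mul_of_nonneg_left (Real.exp_le_exp.mpr (by linarith)) (by linarith)
      _ = 1 := by
          rw [Real.exp_neg, Real.exp_log h2C0]
          field_simp
  have hfinal : Real.exp (2 - θ) ≤ ε := by
    have hlog : 2 - Real.log ε ≤ θ := by
      have := le_abs_self (2 - Real.log ε)
      have h1 := abs_nonneg (Real.log (2*C))
      rw [hK] at hKθ
      linarith
    calc Real.exp (2-θ) ≤ Real.exp (Real.log ε) := Real.exp_le_exp.mpr (by linarith)
      _ = ε := Real.exp_log hε
  set n := A.card with hn
  have hSmeas : ∀ N : ℕ, MeasurableSet {ω | n ≤ ∑ v ∈ Lam A N, gcount A ℓ v (X v ω)} := by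
    intro N
    have hF : Measurable fun ω => ∑ v ∈ Lam A N, gcount A ℓ v (X v ω) :=
      Finset.measurable_sum _ (fun v _ => (gcount_measurable v).comp (hmeas v))
    exact hF ((Set.to_countable _).measurableSet)
  have hsub : {ω | ∀ u ∈ A, (ℓ : EReal) ≤ alphaE (fun v => X v ω) u} ⊆
      ⋃ N : ℕ, {ω | n ≤ ∑ v ∈ Lam A N, gcount A ℓ v (X v ω)} := by
    intro ω hω
    have hwit : ∀ u ∈ A, ∃ r : ℕ, 1 ≤ r ∧ ℓ/2 * r < X (u.1 + (r:ℤ), u.2) ω - X u ω := by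
      intro u hu
      have h1 : ((ℓ/2 : ℝ) : EReal) < ((ℓ : ℝ) : EReal) :=
        EReal.coe_lt_coe_iff.mpr (by linarith)
      have h2 : ((ℓ/2 : ℝ) : EReal) < alphaE (fun v => X v ω) u :=
        lt_of_lt_of_le h1 (hω u hu)
      rw [alphaE, lt_iSup_iff] at h2
      obtain ⟨r, hr⟩ := h2
      by_cases h1r : 1 ≤ r
      · rw [iSup_pos h1r] at hr
        refine ⟨r, h1r, ?_⟩
        have hrr : (0:ℝ) < r := by exact_mod_cast h1r
        have h3 := EReal.coe_lt_coe_iff.mp hr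
        rw [lt_div_iff₀ hrr] at h3
        linarith
      · rw [iSup_neg h1r] at hr
        exact absurd hr (not_lt_bot)
    obtain ⟨N, hN⟩ := cover hℓ0 (fun v => X v ω) hwit
    exact Set.mem_iUnion.mpr ⟨N, hN⟩
  refine le_trans (measure_mono hsub) ?_
  have hmono : Monotone fun N : ℕ => {ω | n ≤ ∑ v ∈ Lam A N, gcount A ℓ v (X v ω)} := by
    intro N M hNM ω hω
    simp only [Set.mem_setOf_eq] at hω ⊢
    refine le_trans hω (Finset.sum_le_sum_of_subset ?_)
    intro v hv
    rcases Finset.mem_union.mp hv with h | h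
    · exact Finset.mem_union_left _ h
    · obtain ⟨a, haA, hmem⟩ := Finset.mem_biUnion.mp h
      obtain ⟨rr, hrr, hveq⟩ := Finset.mem_image.mp hmem
      obtain ⟨hrr1, hrrN⟩ := Finset.mem_Icc.mp hrr
      refine Finset.mem_union_right _ (Finset.mem_biUnion.mpr ⟨a, haA,
        Finset.mem_image.mpr ⟨rr, Finset.mem_Icc.mpr ⟨hrr1, le_trans hrrN hNM⟩, hveq⟩⟩)
  rw [Monotone.measure_iUnion hmono]
  refine iSup_le fun N => ?_
  -- Chernoff bound for fixed N
  have hhm : ∀ v : ℤ × ℤ, Measurable fun x : ℝ =>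
      ENNReal.ofReal (Real.exp (θ * (gcount A ℓ v x : ℝ))) := by
    intro v
    exact ENNReal.measurable_ofReal.comp (Real.measurable_exp.comp
      (measurable_const.mul ((Measurable.of_discrete (f := fun n : ℕ => (n:ℝ))).comp
        (gcount_measurable v))))
  set Z : (ℤ×ℤ) → Ω → ℝ≥0∞ :=
    fun v ω => ENNReal.ofReal (Real.exp (θ * (gcount A ℓ v (X v ω) : ℝ))) with hZ
  have hZmeas : ∀ v, Measurable (Z v) := fun v => (hhm v).comp (hmeas v)
  have hZindep : iIndepFun Z P :=
    hindep.comp (fun v x => ENNReal.ofReal (Real.exp (θ * (gcount A ℓ v x : ℝ)))) hhm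
  have hpt : ∀ ω, ({ω | n ≤ ∑ v ∈ Lam A N, gcount A ℓ v (X v ω)} : Set Ω).indicator 1 ω ≤
      ENNReal.ofReal (Real.exp (-θ * n)) * ∏ v ∈ Lam A N, Z v ω := by
    intro ω
    by_cases hω : ω ∈ {ω | n ≤ ∑ v ∈ Lam A N, gcount A ℓ v (X v ω)}
    · rw [Set.indicator_of_mem hω, Pi.one_apply]
      have hprod : ∏ v ∈ Lam A N, Z v ω =
          ENNReal.ofReal (Real.exp (∑ v ∈ Lam A N, θ * (gcount A ℓ v (X v ω):ℝ))) :=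
        prod_ofReal_exp _ _
      rw [hprod, ← ENNReal.ofReal_mul (Real.exp_nonneg _), ← Real.exp_add]
      have hexp : (0:ℝ) ≤ -θ * n + ∑ v ∈ Lam A N, θ * (gcount A ℓ v (X v ω) : ℝ) := by
        have hsum : (n:ℝ) ≤ ∑ v ∈ Lam A N, (gcount A ℓ v (X v ω) : ℝ) := by
          have := hω
          simp only [Set.mem_setOf_eq] at this
          exact_mod_cast (by push_cast; exact_mod_cast this :
            (n:ℝ) ≤ ((∑ v ∈ Lam A N, gcount A ℓ v (X v ω) : ℕ) : ℝ))
        rw [← Finset.mul_sum]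
        nlinarith
      calc (1:ℝ≥0∞) = ENNReal.ofReal (Real.exp 0) := by simp
        _ ≤ _ := ENNReal.ofReal_le_ofReal (Real.exp_le_exp.mpr hexp)
    · rw [Set.indicator_of_notMem hω]
      exact zero_le
  have hsite : ∀ v ∈ Lam A N, ∫⁻ ω, Z v ω ∂P ≤
      ENNReal.ofReal (Real.exp (Real.exp (-θ * (mfun A v : ℝ)))) := by
    intro v _
    have hmap : ∫⁻ ω, Z v ω ∂P =
        ∫⁻ x, ENNReal.ofReal (Real.exp (θ * (gcount A ℓ v x : ℝ))) ∂μ := by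
      have h := lintegral_map (μ := P) (g := X v)
        (f := fun x => ENNReal.ofReal (Real.exp (θ * (gcount A ℓ v x : ℝ)))) (hhm v) (hmeas v)
      rw [hlaw v] at h
      exact h.symm
    rw [hmap]
    refine le_trans (site_bound μ hℓ0 hc hC htail hq v) ?_
    have hexpm0 : (0:ℝ) ≤ Real.exp (-(c * ℓ / 16) * (mfun A v : ℝ)) := Real.exp_nonneg _
    have h1 : (2*C*Real.exp (-(c * ℓ / 16))) * Real.exp (-(c * ℓ / 16) * (mfun A v : ℝ)) ≤
        Real.exp (-(c * ℓ / 16) * (mfun A v : ℝ)) := by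
      have h2 : 2 * C * Real.exp (-(c * ℓ / 16)) ≤ 1 := by
        have : -(c * ℓ / 16) = -θ := by rw [hθdef]
        rw [this]; exact h2C
      nlinarith
    calc 1 + ENNReal.ofReal ((2*C*Real.exp (-(c * ℓ / 16))) *
          Real.exp (-(c * ℓ / 16) * (mfun A v : ℝ)))
        ≤ 1 + ENNReal.ofReal (Real.exp (-(c * ℓ / 16) * (mfun A v : ℝ))) :=
          add_le_add_right (ENNReal.ofReal_le_ofReal h1) 1
      _ = ENNReal.ofReal (1 + Real.exp (-(c * ℓ / 16) * (mfun A v : ℝ))) := by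
          rw [ENNReal.ofReal_add (by norm_num) hexpm0, ENNReal.ofReal_one]
      _ ≤ ENNReal.ofReal (Real.exp (Real.exp (-θ * (mfun A v : ℝ)))) := by
          refine ENNReal.ofReal_le_ofReal ?_
          have hee : -(c * ℓ / 16) * (mfun A v : ℝ) = -θ * (mfun A v : ℝ) := by rw [hθdef]
          rw [hee]
          have := Real.add_one_le_exp (Real.exp (-θ * (mfun A v : ℝ)))
          linarith
  have hprodbound : ∏ v ∈ Lam A N, ∫⁻ ω, Z v ω ∂P ≤ ENNReal.ofReal (Real.exp (2*n)) := by
    calc ∏ v ∈ Lam A N, ∫⁻ ω, Z v ω ∂P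
        ≤ ∏ v ∈ Lam A N, ENNReal.ofReal (Real.exp (Real.exp (-θ*(mfun A v : ℝ)))) :=
          Finset.prod_le_prod' hsite
      _ = ENNReal.ofReal (Real.exp (∑ v ∈ Lam A N, Real.exp (-θ*(mfun A v : ℝ)))) :=
          prod_ofReal_exp _ _
      _ ≤ ENNReal.ofReal (Real.exp (2*n)) := by
          refine ENNReal.ofReal_le_ofReal (Real.exp_le_exp.mpr ?_)
          exact msum_bound N hq
  calc P {ω | n ≤ ∑ v ∈ Lam A N, gcount A ℓ v (X v ω)}
      = ∫⁻ ω, ({ω | n ≤ ∑ v ∈ Lam A N, gcount A ℓ v (X v ω)} : Set Ω).indicator 1 ω ∂P :=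
        (lintegral_indicator_one (hSmeas N)).symm
    _ ≤ ∫⁻ ω, ENNReal.ofReal (Real.exp (-θ * n)) * ∏ v ∈ Lam A N, Z v ω ∂P :=
        lintegral_mono hpt
    _ = ENNReal.ofReal (Real.exp (-θ * n)) * ∫⁻ ω, ∏ v ∈ Lam A N, Z v ω ∂P :=
        lintegral_const_mul _ (Finset.measurable_prod _ fun v _ => hZmeas v)
    _ = ENNReal.ofReal (Real.exp (-θ * n)) * ∏ v ∈ Lam A N, ∫⁻ ω, Z v ω ∂P := by
        rw [lintegral_prod_indep P Z hZmeas hZindep]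
    _ ≤ ENNReal.ofReal (Real.exp (-θ * n)) * ENNReal.ofReal (Real.exp (2*n)) :=
        mul_le_mul_right hprodbound _
    _ = ENNReal.ofReal (Real.exp (-θ * n) * Real.exp (2*n)) :=
        (ENNReal.ofReal_mul (Real.exp_nonneg _)).symm
    _ ≤ ENNReal.ofReal (ε ^ n) := by
        refine ENNReal.ofReal_le_ofReal ?_
        have e1 : Real.exp (-θ * n) * Real.exp (2*n) = Real.exp (2-θ) ^ n := by
          rw [← Real.exp_add, ← Real.exp_nat_mul]
          congr 1; ring
        rw [e1]
        exact pow_le_pow_left₀ (Real.exp_nonneg _) hfinal n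
end

section
/- Let Y : ℤ → ℝ and ℓ ∈ ℝ, and suppose that for every i ∈ ℤ the set M_ℓ(i) := {Y(j) − (j−i)ℓ : j > i} admits a maximum; let T_ℓ(i) be the smallest index > i achieving this maximum. Let i < j be two integers such that there exists k > i with i ≺_ℓ k and there exists k' > j with j ≺_ℓ k' (i.e. α(i) > ℓ and α(j) > ℓ). If it is not the case that i ≺_ℓ T_ℓ(j), then i < T_ℓ(i) < j. -/
/-- `precRel ℓ Y i j` : `i ≺_ℓ j`, i.e. `i < j` and `Y j > Y i + (j - i) ℓ`
(the mountain at `j` casts a shadow of slope `ℓ` on `i`). -/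
def precRel (ℓ : ℝ) (Y : ℤ → ℝ) (i j : ℤ) : Prop :=
  i < j ∧ Y i + ((j - i : ℤ) : ℝ) * ℓ < Y j

/-- `isTl ℓ Y i t` : `t = T_ℓ(i)`, the smallest `j > i` realizing the maximum of
`M_ℓ(i) = {Y j - (j - i) ℓ : j > i}`. -/
def isTl (ℓ : ℝ) (Y : ℤ → ℝ) (i t : ℤ) : Prop :=
  i < t ∧ (∀ k : ℤ, i < k → Y k - ((k - i : ℤ) : ℝ) * ℓ ≤ Y t - ((t - i : ℤ) : ℝ) * ℓ) ∧
    ∀ j : ℤ, i < j → (∀ k : ℤ, i < k → Y k - ((k - i : ℤ) : ℝ) * ℓ ≤ Y j - ((j - i : ℤ) : ℝ) * ℓ)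
      → t ≤ j

theorem statement8 (Y : ℤ → ℝ) (ℓ : ℝ) (T : ℤ → ℤ) (hT : ∀ i : ℤ, isTl ℓ Y i (T i))
    (i j : ℤ) (hij : i < j)
    (hi : ∃ k : ℤ, precRel ℓ Y i k) (hj : ∃ k' : ℤ, precRel ℓ Y j k')
    (hnot : ¬ precRel ℓ Y i (T j)) :
    i < T i ∧ T i < j := by
  obtain ⟨hti, hmaxi, _⟩ := hT i
  obtain ⟨htj, hmaxj, _⟩ := hT j
  obtain ⟨k, hik, hk⟩ := hi
  obtain ⟨k', hjk, hk'⟩ := hj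
  have h1 : Y i + ((T i - i : ℤ) : ℝ) * ℓ < Y (T i) := by
    have := hmaxi k hik
    push_cast at this hk ⊢
    linarith
  have h2 : Y j + ((T j - j : ℤ) : ℝ) * ℓ < Y (T j) := by
    have := hmaxj k' hjk
    push_cast at this hk' ⊢
    linarith
  refine ⟨hti, ?_⟩
  by_contra h
  push_neg at h
  have hiTj : i < T j := lt_trans hij htj
  have hnot' : Y (T j) ≤ Y i + ((T j - i : ℤ) : ℝ) * ℓ := by
    by_contra h'
    push_neg at h'
    exact hnot ⟨hiTj, h'⟩
  rcases eq_or_lt_of_le h with heq | hlt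
  · rw [← heq] at h1
    push_cast at h1 h2 hnot'
    linarith
  · have h3 := hmaxj (T i) hlt
    push_cast at h1 h2 h3 hnot'
    linarith
end

section
/- Let (Y_i)_{i∈ℤ} be independent and identically distributed real random variables whose common law μ admits a density with respect to Lebesgue measure on ℝ. Then for every ε > 0 there exist n₀ ∈ ℕ* and h₀ > 0 (depending on ε) such that for all h ≤ h₀, P(Y₁ >_h Y₂ >_h ⋯ >_h Y_{n₀}) ≤ ε^{2n₀}. -/
open MeasureTheory ProbabilityTheory
open scoped ENNReal

/-- Joint law of finitely many of the `Y i` is the product measure. -/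
lemma aux_joint {Ω : Type} [MeasurableSpace Ω] (P : Measure Ω) [IsProbabilityMeasure P]
    (Y : ℤ → Ω → ℝ) (μ : Measure ℝ) [IsProbabilityMeasure μ]
    (hmeas : ∀ i, Measurable (Y i))
    (hindep : iIndepFun Y P)
    (hlaw : ∀ i, Measure.map (Y i) P = μ)
    (n : ℕ) (g : Fin n → ℤ) (hg : Function.Injective g) :
    Measure.map (fun ω (k : Fin n) => Y (g k) ω) P = Measure.pi (fun _ => μ) := by
  classical
  have hJ : Measurable (fun ω (k : Fin n) => Y (g k) ω) :=
    measurable_pi_lambda _ fun k => hmeas _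
  refine (Measure.pi_eq fun s hs => ?_).symm
  rw [Measure.map_apply hJ (MeasurableSet.univ_pi hs)]
  set t : ℤ → Set ℝ := Function.extend g s (fun _ => Set.univ) with ht
  have htk : ∀ k, t (g k) = s k := fun k => hg.extend_apply s _ k
  have hpre : (fun ω (k : Fin n) => Y (g k) ω) ⁻¹' (Set.pi Set.univ s)
      = ⋂ i ∈ Finset.image g Finset.univ, Y i ⁻¹' t i := by
    ext ω
    simp only [Set.mem_preimage, Set.mem_pi, Set.mem_univ, true_implies, Set.mem_iInter,
      Finset.mem_image, Finset.mem_univ, true_and]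
    constructor
    · rintro h i ⟨k, rfl⟩
      rw [htk k]; exact h k
    · intro h k
      have := h (g k) ⟨k, rfl⟩
      rwa [htk k] at this
  rw [hpre]
  have hmeast : ∀ i, i ∈ Finset.image g Finset.univ → MeasurableSet (t i) := by
    intro i hi
    rcases Finset.mem_image.mp hi with ⟨k, _, rfl⟩
    rw [htk k]; exact hs k
  rw [hindep.measure_inter_preimage_eq_mul (Finset.image g Finset.univ) hmeast]
  rw [Finset.prod_image (fun a _ b _ hab => hg hab)]
  refine Finset.prod_congr rfl fun k _ => ?_
  rw [htk k, ← hlaw (g k), Measure.map_apply (hmeas _) (hs k)]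

/-- Product measure with identical factors is invariant under permutation of coordinates. -/
lemma aux_perm {n : ℕ} (μ : Measure ℝ) [IsProbabilityMeasure μ] (σ : Equiv.Perm (Fin n)) :
    Measure.map (fun x : Fin n → ℝ => x ∘ σ) (Measure.pi fun _ => μ)
      = Measure.pi fun _ => μ := by
  have hm : Measurable (fun x : Fin n → ℝ => x ∘ σ) :=
    measurable_pi_lambda _ fun k => measurable_pi_apply _
  refine (Measure.pi_eq fun s hs => ?_).symm
  rw [Measure.map_apply hm (MeasurableSet.univ_pi hs)]
  have hpre : (fun x : Fin n → ℝ => x ∘ σ) ⁻¹' (Set.pi Set.univ s)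
      = Set.pi Set.univ (fun j => s (σ.symm j)) := by
    ext x
    simp only [Set.mem_preimage, Set.mem_pi, Set.mem_univ, true_implies, Function.comp]
    constructor
    · intro h j
      have := h (σ.symm j); simpa using this
    · intro h i
      have := h (σ i); simpa using this
  rw [hpre, Measure.pi_pi]
  exact Equiv.prod_comp σ.symm fun i => μ (s i)

theorem statement11
    {Ω : Type} [MeasurableSpace Ω] (P : Measure Ω) [IsProbabilityMeasure P]
    (Y : ℤ → Ω → ℝ) (μ : Measure ℝ) [IsProbabilityMeasure μ]
    (hmeas : ∀ i, Measurable (Y i))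
    (hindep : iIndepFun Y P)
    (hlaw : ∀ i, Measure.map (Y i) P = μ)
    (hdens : ∃ φ : ℝ → ℝ≥0∞, Measurable φ ∧ μ = (volume : Measure ℝ).withDensity φ) :
    ∀ ε : ℝ, 0 < ε → ∃ n₀ : ℕ, 1 ≤ n₀ ∧ ∃ h₀ : ℝ, 0 < h₀ ∧ ∀ h : ℝ, h ≤ h₀ →
      P {ω | ∀ i : ℤ, 1 ≤ i → i < (n₀ : ℤ) → Y (i + 1) ω < Y i ω + h} ≤
        ENNReal.ofReal (ε ^ (2 * n₀)) := by
  classical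
  intro ε hε
  by_cases hε1 : 1 ≤ ε
  · refine ⟨1, le_refl 1, 1, one_pos, fun h hh => ?_⟩
    calc P _ ≤ 1 := prob_le_one
    _ ≤ ENNReal.ofReal (ε ^ (2 * 1)) := by
        rw [ENNReal.one_le_ofReal]
        exact one_le_pow₀ hε1
  push_neg at hε1
  -- μ has no atoms
  have hNoAtoms : NoAtoms μ := by
    obtain ⟨φ, hφ, rfl⟩ := hdens
    constructor
    intro a
    rw [withDensity_apply _ (measurableSet_singleton a),
      Measure.restrict_eq_zero.mpr (measure_singleton a), lintegral_zero_measure]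
  -- choose n with 1/n! < ε^(2n)
  have hx : (0:ℝ) < (ε ^ 2)⁻¹ := by positivity
  have htends := FloorSemiring.tendsto_pow_div_factorial_atTop ((ε ^ 2)⁻¹)
  have hev := (htends.eventually_lt_const one_pos).and (Filter.eventually_ge_atTop 1)
  obtain ⟨n, hn1, hn1'⟩ := hev.exists
  set x : ℝ := (ε ^ 2)⁻¹
  have hfac_pos : (0:ℝ) < (n.factorial : ℝ) := by positivity
  have hxn : x ^ n < (n.factorial : ℝ) := by
    have := hn1
    rwa [div_lt_one hfac_pos] at this
  have hkey : ((n.factorial : ℝ))⁻¹ < ε ^ (2 * n) := by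
    have h1 : ((n.factorial : ℝ))⁻¹ < (x ^ n)⁻¹ := by
      exact inv_strictAnti₀ (by positivity) hxn
    have h2 : (x ^ n)⁻¹ = ε ^ (2 * n) := by
      rw [← inv_pow, inv_inv, ← pow_mul]
    linarith [h1, h2.symm ▸ h1]
  refine ⟨n, hn1', ?_⟩
  -- the product measure and joint map
  set ν : Measure (Fin n → ℝ) := Measure.pi (fun _ => μ) with hν
  set J : Ω → (Fin n → ℝ) := fun ω k => Y ((k : ℤ) + 1) ω with hJdef
  have hg : Function.Injective (fun k : Fin n => (k : ℤ) + 1) := by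
    intro a b hab
    simp only at hab
    ext
    omega
  have hJmeas : Measurable J := measurable_pi_lambda _ fun k => hmeas _
  have hJlaw : Measure.map J P = ν := aux_joint P Y μ hmeas hindep hlaw n _ hg
  -- events
  set E : Set (Fin n → ℝ) := {y | ∀ i j : Fin n, i < j → y j < y i} with hE
  have hEmeas : ∀ σ : Equiv.Perm (Fin n),
      MeasurableSet {y : Fin n → ℝ | ∀ i j : Fin n, i < j → y (σ j) < y (σ i)} := by
    intro σ
    have : {y : Fin n → ℝ | ∀ i j : Fin n, i < j → y (σ j) < y (σ i)}
        = ⋂ (i) (j) (_ : i < j), {y : Fin n → ℝ | y (σ j) < y (σ i)} := by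
      ext y; simp [Set.mem_iInter]
    rw [this]
    exact MeasurableSet.iInter fun i => MeasurableSet.iInter fun j =>
      MeasurableSet.iInter fun _ =>
        measurableSet_lt (measurable_pi_apply _) (measurable_pi_apply _)
  set Eσ : Equiv.Perm (Fin n) → Set (Fin n → ℝ) :=
    fun σ => {y | ∀ i j : Fin n, i < j → y (σ j) < y (σ i)} with hEσ
  have hE_id : E = Eσ 1 := by
    simp [hE, hEσ]
  have hEmeasE : MeasurableSet E := by
    have : E = ⋂ (i) (j) (_ : i < j), {y : Fin n → ℝ | y j < y i} := by
      ext y; simp [hE, Set.mem_iInter]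
    rw [this]
    exact MeasurableSet.iInter fun i => MeasurableSet.iInter fun j =>
      MeasurableSet.iInter fun _ =>
        measurableSet_lt (measurable_pi_apply _) (measurable_pi_apply _)
  -- equal measures
  have hEσ_eq : ∀ σ, ν (Eσ σ) = ν E := by
    intro σ
    have hpre : (fun y : Fin n → ℝ => y ∘ σ) ⁻¹' E = Eσ σ := by
      ext y
      simp [hE, hEσ, Function.comp]
    have hm : Measurable (fun y : Fin n → ℝ => y ∘ σ) :=
      measurable_pi_lambda _ fun k => measurable_pi_apply _
    calc ν (Eσ σ) = ν ((fun y : Fin n → ℝ => y ∘ σ) ⁻¹' E) := by rw [hpre]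
    _ = (Measure.map (fun y : Fin n → ℝ => y ∘ σ) ν) E := (Measure.map_apply hm hEmeasE).symm
    _ = ν E := by rw [aux_perm μ σ]
  -- pairwise disjoint
  have hdisj : Pairwise (Function.onFun Disjoint Eσ) := by
    intro σ τ hne
    rw [Function.onFun]
    rw [Set.disjoint_left]
    intro y hyσ hyτ
    have hσa : StrictAnti (y ∘ σ) := fun i j hij => hyσ i j hij
    have hτa : StrictAnti (y ∘ τ) := fun i j hij => hyτ i j hij
    have hrange : Set.range (y ∘ σ) = Set.range (y ∘ τ) := by
      rw [Set.range_comp, Set.range_comp, σ.surjective.range_eq, τ.surjective.range_eq]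
    have heq : (y ∘ σ) = (y ∘ τ) := (StrictAnti.range_inj hσa hτa).mp hrange
    have hyinj : Function.Injective y := by
      intro a b hab
      have h1 : (y ∘ σ) (σ.symm a) = (y ∘ σ) (σ.symm b) := by
        simp [Function.comp, hab]
      have := hσa.injective h1
      exact σ.symm.injective this
    exact hne (Equiv.ext fun k => hyinj (congrFun heq k))
  -- ν E ≤ 1/n!
  have hEbound : ν E ≤ ((n.factorial : ℝ≥0∞))⁻¹ := by
    have hsum : ∑ σ : Equiv.Perm (Fin n), ν (Eσ σ) = ν (⋃ σ, Eσ σ) := by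
      rw [measure_iUnion hdisj fun σ => hEmeas σ, tsum_fintype]
    have hle1 : ∑ σ : Equiv.Perm (Fin n), ν (Eσ σ) ≤ 1 := by
      rw [hsum]; exact prob_le_one
    have hconst : ∑ σ : Equiv.Perm (Fin n), ν (Eσ σ)
        = (n.factorial : ℝ≥0∞) * ν E := by
      rw [Finset.sum_congr rfl fun σ _ => hEσ_eq σ, Finset.sum_const, Finset.card_univ,
        Fintype.card_perm, Fintype.card_fin, nsmul_eq_mul]
    rw [hconst] at hle1
    rw [ENNReal.le_inv_iff_mul_le, mul_comm]
    exact hle1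
  -- ties are null
  have htie : ∀ a b : ℤ, a ≠ b → P {ω | Y a ω = Y b ω} = 0 := by
    intro a b hab
    have hind := hindep.indepFun hab
    rw [indepFun_iff_map_prod_eq_prod_map_map (hmeas a).aemeasurable
      (hmeas b).aemeasurable, hlaw a, hlaw b] at hind
    have hdiag : MeasurableSet {p : ℝ × ℝ | p.1 = p.2} :=
      measurableSet_eq_fun measurable_fst measurable_snd
    have : {ω | Y a ω = Y b ω} = (fun ω => (Y a ω, Y b ω)) ⁻¹' {p : ℝ × ℝ | p.1 = p.2} := rfl
    rw [this, ← Measure.map_apply ((hmeas a).prodMk (hmeas b)) hdiag, hind,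
      Measure.prod_apply hdiag]
    have hfiber : ∀ c : ℝ, Prod.mk c ⁻¹' {p : ℝ × ℝ | p.1 = p.2} = {c} := by
      intro c; ext d; simp [eq_comm]
    simp only [hfiber, measure_singleton]
    simp [hNoAtoms.measure_singleton]
  -- tie set in the product space
  set T : Set (Fin n → ℝ) :=
    ⋃ (p : Fin n × Fin n), ⋃ (_ : p.1 ≠ p.2), {y : Fin n → ℝ | y p.1 = y p.2} with hT
  have hTmeas_single : ∀ p : Fin n × Fin n, MeasurableSet {y : Fin n → ℝ | y p.1 = y p.2} :=
    fun p => measurableSet_eq_fun (measurable_pi_apply _) (measurable_pi_apply _)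
  have hTnull : ν T = 0 := by
    refine measure_iUnion_null fun p => measure_iUnion_null fun hp => ?_
    have hνS : ν {y : Fin n → ℝ | y p.1 = y p.2} = P (J ⁻¹' {y : Fin n → ℝ | y p.1 = y p.2}) := by
      rw [← hJlaw, Measure.map_apply hJmeas (hTmeas_single p)]
    rw [hνS]
    have : J ⁻¹' {y : Fin n → ℝ | y p.1 = y p.2}
        = {ω | Y ((p.1 : ℤ) + 1) ω = Y ((p.2 : ℤ) + 1) ω} := rfl
    rw [this]
    apply htie
    intro hcon
    apply hp
    have : ((p.1 : ℤ)) = (p.2 : ℤ) := by omega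
    ext
    omega
  -- the weak and strict chain events
  set Wh : ℝ → Set (Fin n → ℝ) :=
    fun h => {y | ∀ a b : Fin n, (a : ℕ) + 1 = (b : ℕ) → y b < y a + h} with hWh
  set W : Set (Fin n → ℝ) :=
    {y | ∀ a b : Fin n, (a : ℕ) + 1 = (b : ℕ) → y b ≤ y a} with hW
  have hWhmeas : ∀ h : ℝ, MeasurableSet (Wh h) := by
    intro h
    have : Wh h = ⋂ (a : Fin n) (b : Fin n) (_ : (a : ℕ) + 1 = (b : ℕ)),
        {y : Fin n → ℝ | y b < y a + h} := by
      ext y; simp [hWh, Set.mem_iInter]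
    rw [this]
    exact MeasurableSet.iInter fun a => MeasurableSet.iInter fun b =>
      MeasurableSet.iInter fun _ =>
        measurableSet_lt (measurable_pi_apply _) (by fun_prop)
  -- W ⊆ E ∪ T
  have hWsub : W ⊆ E ∪ T := by
    intro y hy
    by_cases hyE : y ∈ E
    · exact Or.inl hyE
    · right
      -- consecutive implies full antitone
      have key : ∀ (m : ℕ) (hm : m < n) (i : Fin n), (i : ℕ) ≤ m → y ⟨m, hm⟩ ≤ y i := by
        intro m
        induction m with
        | zero =>
          intro hm i hi
          have : i = ⟨0, hm⟩ := by ext; simp; omega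
          rw [this]
        | succ k ih =>
          intro hm i hi
          by_cases hik : (i : ℕ) = k + 1
          · have : i = ⟨k + 1, hm⟩ := by ext; simp; omega
            rw [this]
          · have hik' : (i : ℕ) ≤ k := by omega
            have hk : k < n := by omega
            have h1 : y ⟨k + 1, hm⟩ ≤ y ⟨k, hk⟩ := hy ⟨k, hk⟩ ⟨k + 1, hm⟩ rfl
            exact le_trans h1 (ih hk i hik')
      simp only [hE, Set.mem_setOf_eq, not_forall] at hyE
      obtain ⟨i, j, hij, hnlt⟩ := hyE
      have h1 : y i ≤ y j := le_of_not_gt hnlt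
      have h2 : y j ≤ y i := by
        have := key (j : ℕ) j.isLt i (le_of_lt hij)
        simpa using this
      have heq : y i = y j := le_antisymm h1 h2
      refine Set.mem_iUnion.mpr ⟨(i, j), Set.mem_iUnion.mpr ⟨ne_of_lt hij, heq⟩⟩
  -- ν W ≤ 1/n!
  have hWbound : ν W ≤ ((n.factorial : ℝ≥0∞))⁻¹ := by
    calc ν W ≤ ν (E ∪ T) := measure_mono hWsub
    _ ≤ ν E + ν T := measure_union_le _ _
    _ = ν E := by rw [hTnull, add_zero]
    _ ≤ _ := hEbound
  -- continuity from above
  set s : ℕ → Set (Fin n → ℝ) := fun m => Wh (1 / ((m : ℝ) + 1)) with hs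
  have hanti : Antitone s := by
    intro m m' hmm'
    intro y hy
    intro a b hab
    have h1 : (1 : ℝ) / ((m' : ℝ) + 1) ≤ 1 / ((m : ℝ) + 1) := by
      apply div_le_div_of_nonneg_left one_pos.le (by positivity)
      exact_mod_cast by omega
    exact lt_of_lt_of_le (hy a b hab) (by linarith)
  have hiInter : ⋂ m, s m = W := by
    ext y
    simp only [Set.mem_iInter, hs, hWh, hW, Set.mem_setOf_eq]
    constructor
    · intro hall a b hab
      by_contra hcon
      push_neg at hcon
      obtain ⟨m, hm⟩ := exists_nat_one_div_lt (show (0:ℝ) < y b - y a by linarith)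
      have := hall m a b hab
      linarith
    · intro hle m a b hab
      have := hle a b hab
      have hpos : (0:ℝ) < 1 / ((m : ℝ) + 1) := by positivity
      linarith
  have htendsto := tendsto_measure_iInter_atTop (μ := ν)
    (fun m => (hWhmeas _).nullMeasurableSet) hanti ⟨0, measure_ne_top _ _⟩
  rw [hiInter] at htendsto
  have hlt : ν W < ENNReal.ofReal (ε ^ (2 * n)) := by
    refine lt_of_le_of_lt hWbound ?_
    have h1 : ((n.factorial : ℝ≥0∞))⁻¹ = ENNReal.ofReal ((n.factorial : ℝ))⁻¹ := by
      rw [ENNReal.ofReal_inv_of_pos hfac_pos, ENNReal.ofReal_natCast]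
    rw [h1]
    exact ENNReal.ofReal_lt_ofReal_iff (by positivity) |>.mpr hkey
  obtain ⟨m₀, hm₀⟩ := (htendsto.eventually_lt_const hlt).exists
  refine ⟨1 / ((m₀ : ℝ) + 1), by positivity, fun h hh => ?_⟩
  -- the statement event at h is inside the event at h₀, which maps to Wh h₀
  have hsubev : {ω | ∀ i : ℤ, 1 ≤ i → i < (n : ℤ) → Y (i + 1) ω < Y i ω + h}
      ⊆ J ⁻¹' (s m₀) := by
    intro ω hω
    intro a b hab
    have hb : ((b : ℕ) : ℤ) < (n : ℤ) := by exact_mod_cast b.isLt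
    have h1 : (1 : ℤ) ≤ (a : ℤ) + 1 := by omega
    have h2 : (a : ℤ) + 1 < (n : ℤ) := by omega
    have h3 := hω ((a : ℤ) + 1) h1 h2
    have hba : (a : ℤ) + 1 + 1 = (b : ℤ) + 1 := by omega
    rw [hba] at h3
    simp only [hJdef]
    calc Y ((b : ℤ) + 1) ω < Y ((a : ℤ) + 1) ω + h := h3
    _ ≤ Y ((a : ℤ) + 1) ω + 1 / ((m₀ : ℝ) + 1) := by linarith
  calc P {ω | ∀ i : ℤ, 1 ≤ i → i < (n : ℤ) → Y (i + 1) ω < Y i ω + h}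
      ≤ P (J ⁻¹' (s m₀)) := measure_mono hsubev
  _ = ν (s m₀) := by rw [← hJlaw, Measure.map_apply hJmeas (hWhmeas _)]
  _ ≤ ENNReal.ofReal (ε ^ (2 * n)) := le_of_lt hm₀
end

section
/- Let X : ℤ² → ℝ be a random field whose entries are independent and identically distributed with common law μ, and suppose μ admits a density with respect to Lebesgue measure on ℝ. Then for every η > 0 there exist R₀ ≥ 1 and ℓ₀ > 0 such that for every u ∈ ℤ² and every ℓ ∈ [0, ℓ₀], P(α_{R₀}(u) ≤ ℓ) ≤ η. -/
open MeasureTheory ProbabilityTheory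
open scoped ENNReal

/-- The truncated field `α_R(u) = max_{1 ≤ r ≤ R} (X(u + r e₁) - X(u)) / r`
(for `R ≥ 1` the index set is finite and nonempty, so the `ℝ`-valued
supremum is this maximum). -/
noncomputable def alphaR (X : ℤ × ℤ → ℝ) (R : ℕ) (u : ℤ × ℤ) : ℝ :=
  ⨆ r : (Finset.Icc 1 R : Finset ℕ), (X (u.1 + ((r : ℕ) : ℤ), u.2) - X u) / ((r : ℕ) : ℝ)

section Aux

variable {Ω : Type} [MeasurableSpace Ω] (P : Measure Ω) [IsProbabilityMeasure P]
  (X : ℤ × ℤ → Ω → ℝ) (μ : Measure ℝ) [IsProbabilityMeasure μ]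

/-- The joint law of finitely many distinct coordinates is the product measure. -/
lemma map_eq_pi (hmeas : ∀ u, Measurable (X u))
    (hindep : iIndepFun X P)
    (hlaw : ∀ u, Measure.map (X u) P = μ)
    {n : ℕ} (g : Fin n → ℤ × ℤ) (hg : Function.Injective g) :
    Measure.map (fun ω i => X (g i) ω) P = Measure.pi fun _ : Fin n => μ := by
  refine (Measure.pi_eq fun s hs => ?_).symm
  have hΦ : Measurable (fun ω (i : Fin n) => X (g i) ω) :=
    measurable_pi_lambda _ fun i => hmeas _
  rw [Measure.map_apply hΦ (MeasurableSet.univ_pi hs)]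
  classical
  set s' : ℤ × ℤ → Set ℝ := Function.extend g s fun _ => Set.univ with hs'
  have hext : ∀ i, s' (g i) = s i := fun i => hg.extend_apply _ _ i
  have hpre : (fun ω (i : Fin n) => X (g i) ω) ⁻¹' Set.pi Set.univ s
      = ⋂ v ∈ Finset.univ.image g, X v ⁻¹' s' v := by
    ext ω
    simp only [Set.mem_preimage, Set.mem_univ_pi, Set.mem_iInter, Finset.mem_image,
      Finset.mem_univ, true_and]
    constructor
    · rintro h v ⟨i, rfl⟩
      rw [hext]; exact h i
    · intro h i
      have := h (g i) ⟨i, rfl⟩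
      rwa [hext] at this
  have hmeas' : ∀ v ∈ Finset.univ.image g, MeasurableSet (s' v) := by
    intro v hv
    rcases Finset.mem_image.1 hv with ⟨i, _, rfl⟩
    rw [hext]; exact hs i
  rw [hpre, hindep.measure_inter_preimage_eq_mul (Finset.univ.image g) hmeas',
    Finset.prod_image (fun a _ b _ hab => hg hab)]
  refine Finset.prod_congr rfl fun i _ => ?_
  rw [hext, ← hlaw (g i), Measure.map_apply (hmeas _) (hs i)]

lemma diag_null (hmeas : ∀ u, Measurable (X u))
    (hindep : iIndepFun X P)
    (hlaw : ∀ u, Measure.map (X u) P = μ)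
    (hden : μ ≪ (volume : Measure ℝ)) {a b : ℤ × ℤ} (hab : a ≠ b) :
    P {ω | X a ω = X b ω} = 0 := by
  have hind : IndepFun (X a) (X b) P := hindep.indepFun hab
  have hmap := (indepFun_iff_map_prod_eq_prod_map_map (hmeas a).aemeasurable
    (hmeas b).aemeasurable).1 hind
  have hD : MeasurableSet {p : ℝ × ℝ | p.1 = p.2} :=
    measurableSet_eq_fun measurable_fst measurable_snd
  have hset : {ω | X a ω = X b ω} = (fun ω => (X a ω, X b ω)) ⁻¹' {p | p.1 = p.2} := rfl
  rw [hset, ← Measure.map_apply ((hmeas a).prodMk (hmeas b)) hD, hmap, hlaw, hlaw,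
    Measure.prod_apply hD]
  have hz : ∀ x : ℝ, μ (Prod.mk x ⁻¹' {p : ℝ × ℝ | p.1 = p.2}) = 0 := by
    intro x
    have : Prod.mk x ⁻¹' {p : ℝ × ℝ | p.1 = p.2} = {x} := by
      ext y; simp [eq_comm]
    rw [this]
    exact hden (measure_singleton x)
  have h0 : ∀ x : ℝ, μ {x} = 0 := fun x => hden (measure_singleton x)
  simp [hz, h0]

lemma max_prob (hmeas : ∀ u, Measurable (X u))
    (hindep : iIndepFun X P)
    (hlaw : ∀ u, Measure.map (X u) P = μ)
    (hden : μ ≪ (volume : Measure ℝ))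
    {n : ℕ} (g : Fin (n+1) → ℤ × ℤ) (hg : Function.Injective g) :
    P {ω | ∀ j, X (g j) ω ≤ X (g 0) ω} ≤ ((n+1 : ℕ) : ℝ≥0∞)⁻¹ := by
  classical
  set B : Fin (n+1) → Set Ω := fun i => {ω | ∀ j, X (g j) ω ≤ X (g i) ω} with hB
  have hBm : ∀ i, MeasurableSet (B i) := by
    intro i
    have : B i = ⋂ j, {ω | X (g j) ω ≤ X (g i) ω} := by
      ext ω; simp [hB]
    rw [this]
    exact MeasurableSet.iInter fun j => measurableSet_le (hmeas _) (hmeas _)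
  have hunion : (⋃ i, B i) = Set.univ := by
    ext ω
    simp only [Set.mem_iUnion, Set.mem_univ, iff_true]
    obtain ⟨i, hi⟩ := Finite.exists_max (fun j => X (g j) ω)
    exact ⟨i, fun j => hi j⟩
  have hdisj : Pairwise (Function.onFun (AEDisjoint P) B) := by
    intro i j hij
    refine measure_mono_null ?_
      (diag_null P X μ hmeas hindep hlaw hden (fun h => hij (hg h)))
    rintro ω ⟨hi, hj⟩
    exact le_antisymm (hj i) (hi j)
  have hsum : ∑' i, P (B i) = 1 := by
    rw [← measure_iUnion₀ hdisj (fun i => (hBm i).nullMeasurableSet), hunion, measure_univ]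
  set S : Set (Fin (n+1) → ℝ) := {x | ∀ j, x j ≤ x 0} with hS
  have hSm : MeasurableSet S := by
    have : S = ⋂ j, {x : Fin (n+1) → ℝ | x j ≤ x 0} := by
      ext x; simp [hS]
    rw [this]
    exact MeasurableSet.iInter fun j =>
      measurableSet_le (measurable_pi_apply j) (measurable_pi_apply 0)
  have key : ∀ i, P (B i) = (Measure.pi fun _ : Fin (n+1) => μ) S := by
    intro i
    have hg' : Function.Injective (g ∘ Equiv.swap 0 i) := hg.comp (Equiv.injective _)
    have hΦ : Measurable (fun ω (j : Fin (n+1)) => X ((g ∘ Equiv.swap 0 i) j) ω) :=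
      measurable_pi_lambda _ fun j => hmeas _
    have hmap := map_eq_pi P X μ hmeas hindep hlaw _ hg'
    have hpre : (fun ω (j : Fin (n+1)) => X ((g ∘ Equiv.swap 0 i) j) ω) ⁻¹' S = B i := by
      ext ω
      simp only [Set.mem_preimage, hS, Set.mem_setOf_eq, Function.comp_apply, hB,
        Equiv.swap_apply_left]
      constructor
      · intro h j
        have := h (Equiv.swap 0 i j)
        rwa [Equiv.swap_apply_self] at this
      · intro h j
        exact h _
    rw [← hpre, ← Measure.map_apply hΦ hSm, hmap]
  have hc : ((n+1 : ℕ) : ℝ≥0∞) * (Measure.pi fun _ : Fin (n+1) => μ) S = 1 := by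
    calc ((n+1 : ℕ) : ℝ≥0∞) * (Measure.pi fun _ : Fin (n+1) => μ) S
        = ∑ _i : Fin (n+1), (Measure.pi fun _ : Fin (n+1) => μ) S := by
          rw [Finset.sum_const, Finset.card_univ, Fintype.card_fin, nsmul_eq_mul]
      _ = ∑ i : Fin (n+1), P (B i) := Finset.sum_congr rfl fun i _ => (key i).symm
      _ = ∑' i, P (B i) := (tsum_fintype _).symm
      _ = 1 := hsum
  have hval : (Measure.pi fun _ : Fin (n+1) => μ) S = ((n+1 : ℕ) : ℝ≥0∞)⁻¹ :=
    ENNReal.eq_inv_of_mul_eq_one_left (by rw [mul_comm] at hc; exact hc)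
  exact le_of_eq ((key 0).trans hval)

end Aux

theorem statement13
    {Ω : Type} [MeasurableSpace Ω] (P : Measure Ω) [IsProbabilityMeasure P]
    (X : ℤ × ℤ → Ω → ℝ) (μ : Measure ℝ) [IsProbabilityMeasure μ]
    (hmeas : ∀ u, Measurable (X u))
    (hindep : iIndepFun X P)
    (hlaw : ∀ u, Measure.map (X u) P = μ)
    (hdens : ∃ φ : ℝ → ℝ≥0∞, Measurable φ ∧ μ = (volume : Measure ℝ).withDensity φ) :
    ∀ η : ℝ, 0 < η → ∃ R₀ : ℕ, 1 ≤ R₀ ∧ ∃ ℓ₀ : ℝ, 0 < ℓ₀ ∧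
      ∀ u : ℤ × ℤ, ∀ ℓ : ℝ, 0 ≤ ℓ → ℓ ≤ ℓ₀ →
        P {ω | alphaR (fun v => X v ω) R₀ u ≤ ℓ} ≤ ENNReal.ofReal η := by
  obtain ⟨φ, hφm, hφ⟩ := hdens
  have hden : μ ≪ (volume : Measure ℝ) := hφ ▸ withDensity_absolutelyContinuous _ _
  intro η hη
  obtain ⟨N, hN⟩ := exists_nat_gt (1/η)
  set R₀ := max N 1 with hR₀def
  have hR₀1 : 1 ≤ R₀ := le_max_right _ _
  have hRlt : (1 : ℝ) / (R₀ + 1) < η := by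
    rw [div_lt_iff₀ (by positivity)]
    have h1 : 1/η < (R₀ : ℝ) + 1 := lt_of_lt_of_le hN (by
      have : (N : ℝ) ≤ R₀ := by exact_mod_cast le_max_left N 1
      linarith)
    calc (1:ℝ) = η * (1/η) := by field_simp
      _ < η * ((R₀:ℝ) + 1) := by
          exact mul_lt_mul_of_pos_left h1 hη
  have hlt : (((R₀+1 : ℕ)) : ℝ≥0∞)⁻¹ < ENNReal.ofReal η := by
    have h1 : (((R₀+1 : ℕ)) : ℝ≥0∞)⁻¹ = ENNReal.ofReal (1/((R₀:ℝ)+1)) := by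
      rw [one_div, ENNReal.ofReal_inv_of_pos (by positivity)]
      congr 1
      rw [← ENNReal.ofReal_natCast (R₀+1)]
      push_cast
      ring_nf
    rw [h1]
    exact (ENNReal.ofReal_lt_ofReal_iff hη).2 hRlt
  set ν := (Measure.pi fun _ : Fin (R₀+1) => μ) with hν
  set T : ℕ → Set (Fin (R₀+1) → ℝ) :=
    fun k => {x | ∀ j, x j ≤ x 0 + (R₀ : ℝ) * (1/(k+1))} with hT
  have hTm : ∀ k, MeasurableSet (T k) := by
    intro k
    have : T k = ⋂ j, {x : Fin (R₀+1) → ℝ | x j ≤ x 0 + (R₀ : ℝ) * (1/(k+1))} := by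
      ext x; simp [hT]
    rw [this]
    exact MeasurableSet.iInter fun j => measurableSet_le (measurable_pi_apply j)
      ((measurable_pi_apply 0).add measurable_const)
  have hTanti : Antitone T := by
    intro k k' hkk' x hx j
    refine le_trans (hx j) ?_
    have h2 : (1:ℝ)/((k':ℝ)+1) ≤ 1/((k:ℝ)+1) := by
      apply one_div_le_one_div_of_le (by positivity)
      have : (k:ℝ) ≤ (k':ℝ) := by exact_mod_cast hkk'
      linarith
    have h3 := mul_le_mul_of_nonneg_left h2 (by positivity : (0:ℝ) ≤ (R₀:ℝ))
    linarith
  have hTint : (⋂ k, T k) ⊆ {x : Fin (R₀+1) → ℝ | ∀ j, x j ≤ x 0} := by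
    intro x hx j
    refine le_of_forall_pos_le_add fun ε hε => ?_
    obtain ⟨k, hk⟩ := exists_nat_gt ((R₀ : ℝ)/ε)
    have hxk := Set.mem_iInter.1 hx k j
    have : (R₀ : ℝ) * (1/(k+1)) ≤ ε := by
      rw [mul_one_div, div_le_iff₀ (by positivity)]
      have : (R₀ : ℝ)/ε < k + 1 := by linarith
      calc (R₀ : ℝ) = ε * ((R₀:ℝ)/ε) := by field_simp
        _ ≤ ε * ((k:ℝ)+1) := by
            exact mul_le_mul_of_nonneg_left this.le hε.le
    linarith
  have hSm : MeasurableSet {x : Fin (R₀+1) → ℝ | ∀ j, x j ≤ x 0} := by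
    have : {x : Fin (R₀+1) → ℝ | ∀ j, x j ≤ x 0}
        = ⋂ j, {x : Fin (R₀+1) → ℝ | x j ≤ x 0} := by
      ext x; simp
    rw [this]
    exact MeasurableSet.iInter fun j =>
      measurableSet_le (measurable_pi_apply j) (measurable_pi_apply 0)
  have base : ν {x : Fin (R₀+1) → ℝ | ∀ j, x j ≤ x 0} ≤ (((R₀+1 : ℕ)) : ℝ≥0∞)⁻¹ := by
    set g0 : Fin (R₀+1) → ℤ × ℤ := fun j => (((j : ℕ) : ℤ), 0) with hg0
    have hg0inj : Function.Injective g0 := by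
      intro a b hab
      have : ((a : ℕ) : ℤ) = ((b : ℕ) : ℤ) := congrArg Prod.fst hab
      exact Fin.ext (by exact_mod_cast this)
    have hΦ : Measurable (fun ω (j : Fin (R₀+1)) => X (g0 j) ω) :=
      measurable_pi_lambda _ fun j => hmeas _
    rw [hν, ← map_eq_pi P X μ hmeas hindep hlaw g0 hg0inj, Measure.map_apply hΦ hSm]
    exact max_prob P X μ hmeas hindep hlaw hden g0 hg0inj
  have htend := tendsto_measure_iInter_atTop (μ := ν)
    (fun k => (hTm k).nullMeasurableSet) hTanti ⟨0, measure_ne_top _ _⟩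
  have hlim : ν (⋂ k, T k) < ENNReal.ofReal η :=
    lt_of_le_of_lt (le_trans (measure_mono hTint) base) hlt
  obtain ⟨k₀, hk₀⟩ := (htend.eventually_lt_const hlim).exists
  refine ⟨R₀, hR₀1, 1/((k₀:ℝ)+1), by positivity, ?_⟩
  intro u ℓ hℓ0 hℓ
  set g : Fin (R₀+1) → ℤ × ℤ := fun j => (u.1 + ((j:ℕ) : ℤ), u.2) with hgdef
  have hginj : Function.Injective g := by
    intro a b hab
    have h1 : u.1 + ((a:ℕ):ℤ) = u.1 + ((b:ℕ):ℤ) := congrArg Prod.fst hab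
    have h2 : ((a:ℕ):ℤ) = ((b:ℕ):ℤ) := by linarith
    exact Fin.ext (by exact_mod_cast h2)
  have hΦ : Measurable (fun ω (j : Fin (R₀+1)) => X (g j) ω) :=
    measurable_pi_lambda _ fun j => hmeas _
  have hg0 : g 0 = u := by simp [hgdef]
  have hsub : {ω | alphaR (fun v => X v ω) R₀ u ≤ ℓ}
      ⊆ (fun ω (j : Fin (R₀+1)) => X (g j) ω) ⁻¹' T k₀ := by
    intro ω hω
    intro j
    simp only [Set.mem_setOf_eq] at hω
    have hω' : (⨆ r : (Finset.Icc 1 R₀ : Finset ℕ),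
        ((fun v => X v ω) (u.1 + ((r : ℕ) : ℤ), u.2) - (fun v => X v ω) u) / ((r : ℕ) : ℝ)) ≤ ℓ := hω
    have hc : (0:ℝ) ≤ (R₀:ℝ) * (1/((k₀:ℝ)+1)) := by positivity
    rcases Nat.eq_zero_or_pos (j : ℕ) with h0 | h1
    · have hj0 : j = 0 := Fin.ext h0
      rw [hj0]
      linarith
    · have hmem : (j:ℕ) ∈ Finset.Icc 1 R₀ := Finset.mem_Icc.2 ⟨h1, Nat.lt_succ_iff.1 j.isLt⟩
      have hbdd : BddAbove (Set.range fun r : (Finset.Icc 1 R₀ : Finset ℕ) =>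
          ((fun v => X v ω) (u.1 + ((r : ℕ) : ℤ), u.2) - (fun v => X v ω) u) / ((r : ℕ) : ℝ)) :=
        (Set.finite_range _).bddAbove
      have hterm := le_ciSup hbdd (⟨(j:ℕ), hmem⟩ : (Finset.Icc 1 R₀ : Finset ℕ))
      have hjle : ((X (u.1 + ((j:ℕ):ℤ), u.2) ω - X u ω) / ((j:ℕ):ℝ)) ≤ ℓ :=
        le_trans hterm hω'
      have hjpos : (0:ℝ) < ((j:ℕ):ℝ) := by exact_mod_cast h1
      rw [div_le_iff₀ hjpos] at hjle
      have hjR : ((j:ℕ):ℝ) ≤ (R₀:ℝ) := by exact_mod_cast Nat.lt_succ_iff.1 j.isLt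
      have hmul : ℓ * ((j:ℕ):ℝ) ≤ (1/((k₀:ℝ)+1)) * (R₀:ℝ) :=
        mul_le_mul hℓ hjR (by positivity) (by positivity)
      show X (g j) ω ≤ X (g 0) ω + (R₀:ℝ) * (1/((k₀:ℝ)+1))
      rw [hg0]
      have hXj : X (g j) ω = X (u.1 + ((j:ℕ):ℤ), u.2) ω := rfl
      rw [hXj]
      nlinarith [hjle, hmul]
  calc P {ω | alphaR (fun v => X v ω) R₀ u ≤ ℓ}
      ≤ P ((fun ω (j : Fin (R₀+1)) => X (g j) ω) ⁻¹' T k₀) := measure_mono hsub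
    _ = ν (T k₀) := by
        rw [← Measure.map_apply hΦ (hTm k₀),
          map_eq_pi P X μ hmeas hindep hlaw g hginj]
    _ ≤ ENNReal.ofReal η := hk₀.le
end

section
/- Let X : ℤ² → ℝ be a random field whose entries are independent and identically distributed with common law μ, and suppose μ has a finite first moment, ∫ℝ |x| μ(dx) < ∞. Fix j ∈ ℤ. Then almost surely, for every u ∈ ℤ the set M(u) := {v ∈ ℤ : v > u and α_j(u) = (X(v,j) − X(u,j))/(v − u)} is non-empty; in particular the supremum defining α_j(u) is attained and M(u) admits a minimum T(u). -/
open MeasureTheory ProbabilityTheory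
open scoped ENNReal

/-- The restriction to the line `ℤ × {j}` of the field `α`:
`α_j(u) = sup_{r ≥ 1} (X(u + r, j) - X(u, j)) / r`, valued in `EReal`. -/
noncomputable def alphaJ (X : ℤ × ℤ → ℝ) (j u : ℤ) : EReal :=
  ⨆ (r : ℕ) (_ : 1 ≤ r), (((X (u + (r : ℤ), j) - X (u, j)) / (r : ℝ) : ℝ) : EReal)

/-- The slope `τ_j(u,v) = (X(v,j) - X(u,j)) / (v - u)` for `u < v`. -/
noncomputable def tauJ (X : ℤ × ℤ → ℝ) (j u v : ℤ) : ℝ :=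
  (X (v, j) - X (u, j)) / ((v - u : ℤ) : ℝ)

/-- `M(u)` (for the row `j`): the set of `v > u` at which the supremum
defining `α_j(u)` is attained. -/
def Mset (X : ℤ × ℤ → ℝ) (j u : ℤ) : Set ℤ :=
  {v : ℤ | u < v ∧ alphaJ X j u = ((tauJ X j u v : ℝ) : EReal)}

open Filter Function
open scoped Topology

section Aux

/-- A real sequence tending to `0` which has some nonnegative term among indices `≥ 1`
attains its supremum over indices `≥ 1`. -/
lemma exists_max_of_tendsto_zero (f : ℕ → ℝ)
    (h0 : Tendsto f atTop (𝓝 0)) (hr0 : ∃ r, 1 ≤ r ∧ 0 ≤ f r) :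
    ∃ r, 1 ≤ r ∧ ∀ s, 1 ≤ s → f s ≤ f r := by
  obtain ⟨r0, hr01, hf0⟩ := hr0
  by_cases hcase : ∀ s, 1 ≤ s → f s ≤ f r0
  · exact ⟨r0, hr01, hcase⟩
  push_neg at hcase
  obtain ⟨r1, hr11, hlt⟩ := hcase
  have hc : 0 < f r1 := lt_of_le_of_lt hf0 hlt
  have hev : ∀ᶠ s in atTop, f s < f r1 := h0.eventually (gt_mem_nhds hc)
  obtain ⟨N, hN⟩ := eventually_atTop.mp hev
  obtain ⟨r, hrF, hmax⟩ := Finset.exists_max_image (Finset.Icc 1 (max N r1)) f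
    ⟨r1, Finset.mem_Icc.mpr ⟨hr11, le_max_right _ _⟩⟩
  refine ⟨r, (Finset.mem_Icc.mp hrF).1, fun s hs => ?_⟩
  by_cases hsF : s ≤ max N r1
  · exact hmax s (Finset.mem_Icc.mpr ⟨hs, hsF⟩)
  · push_neg at hsF
    have h1 : f s < f r1 := hN s (le_of_lt (lt_of_le_of_lt (le_max_left _ _) hsF))
    exact le_trans h1.le (hmax r1 (Finset.mem_Icc.mpr ⟨hr11, le_max_right _ _⟩))

/-- Deterministic criterion for `M(u)` to be nonempty: the slopes tend to `0`
and at least one slope is nonnegative. -/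
lemma attained (X : ℤ × ℤ → ℝ) (j u : ℤ)
    (h0 : Tendsto (fun r : ℕ => (X (u + (r : ℤ), j) - X (u, j)) / (r : ℝ)) atTop (𝓝 0))
    (hpos : ∃ r : ℕ, 1 ≤ r ∧ X (u, j) ≤ X (u + (r : ℤ), j)) :
    (Mset X j u).Nonempty := by
  set f : ℕ → ℝ := fun r => (X (u + (r : ℤ), j) - X (u, j)) / (r : ℝ) with hf
  have hr0 : ∃ r, 1 ≤ r ∧ 0 ≤ f r := by
    obtain ⟨r, hr1, hle⟩ := hpos
    exact ⟨r, hr1, div_nonneg (sub_nonneg.mpr hle) (Nat.cast_nonneg r)⟩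
  obtain ⟨r, hr1, hmax⟩ := exists_max_of_tendsto_zero f h0 hr0
  have hrpos : (0 : ℤ) < (r : ℤ) := by exact_mod_cast hr1
  refine ⟨u + (r : ℤ), lt_add_of_pos_right u hrpos, ?_⟩
  have htau : tauJ X j u (u + (r : ℤ)) = f r := by
    simp only [tauJ, hf, add_sub_cancel_left, Int.cast_natCast]
  rw [htau]
  apply le_antisymm
  · exact iSup₂_le fun s hs => EReal.coe_le_coe_iff.mpr (hmax s hs)
  · exact le_iSup₂ (f := fun (s : ℕ) (_ : 1 ≤ s) =>
      (((X (u + (s : ℤ), j) - X (u, j)) / (s : ℝ) : ℝ) : EReal)) r hr1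

variable {Ω : Type} [MeasurableSpace Ω] (P : Measure Ω) [IsProbabilityMeasure P]
  (X : ℤ × ℤ → Ω → ℝ) (μ : Measure ℝ) [IsProbabilityMeasure μ]

/-- Any finite tuple of entries of the field has the product law `μ ⊗ ⋯ ⊗ μ`. -/
lemma map_tuple_eq_pi (hmeas : ∀ u, Measurable (X u))
    (hindep : iIndepFun X P)
    (hlaw : ∀ u, Measure.map (X u) P = μ)
    (n : ℕ) (g : Fin (n + 1) → ℤ × ℤ) (hg : Injective g) :
    P.map (fun ω i => X (g i) ω) = Measure.pi (fun _ : Fin (n + 1) => μ) := by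
  symm
  apply Measure.pi_eq
  intro s hs
  rw [Measure.map_apply (measurable_pi_lambda _ fun i => hmeas (g i))
    (MeasurableSet.univ_pi hs)]
  have hpre : (fun ω i => X (g i) ω) ⁻¹' Set.pi Set.univ s = ⋂ i, X (g i) ⁻¹' s i := by
    ext ω; simp [Set.mem_pi]
  rw [hpre]
  classical
  set S : Finset (ℤ × ℤ) := Finset.image g Finset.univ with hS
  set sets : ℤ × ℤ → Set ℝ := fun p => s (Function.invFun g p) with hsets
  have hinv : ∀ i, Function.invFun g (g i) = i := fun i => Function.leftInverse_invFun hg i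
  have hsetsg : ∀ i, sets (g i) = s i := fun i => by
    simp only [hsets]; exact congrArg s (hinv i)
  have h1 : ⋂ i, X (g i) ⁻¹' s i = ⋂ p ∈ S, X p ⁻¹' sets p := by
    ext ω
    simp only [Set.mem_iInter, hS, Finset.mem_image, Finset.mem_univ, true_and]
    constructor
    · rintro h p ⟨i, rfl⟩
      rw [hsetsg i]; exact h i
    · intro h i
      have := h (g i) ⟨i, rfl⟩
      rwa [hsetsg i] at this
  rw [h1, hindep.measure_inter_preimage_eq_mul S
    (fun p _ => hs (Function.invFun g p))]
  rw [hS, Finset.prod_image (fun i _ i' _ h => hg h)]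
  refine Finset.prod_congr rfl fun i _ => ?_
  rw [hinv i, ← hlaw (g i), Measure.map_apply (hmeas (g i)) (hs i)]

/-- Almost surely some entry to the right of `(u, j)` is at least `X (u, j)`. -/
lemma ae_exists_ge (hmeas : ∀ u, Measurable (X u))
    (hindep : iIndepFun X P)
    (hlaw : ∀ u, Measure.map (X u) P = μ) (j u : ℤ) :
    ∀ᵐ ω ∂P, ∃ r : ℕ, 1 ≤ r ∧ X (u, j) ω ≤ X (u + (r : ℤ), j) ω := by
  rw [ae_iff]
  set B : Set Ω := {ω | ∀ r : ℕ, 1 ≤ r → X (u + (r : ℤ), j) ω < X (u, j) ω} with hB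
  have hBeq : {ω | ¬ ∃ r : ℕ, 1 ≤ r ∧ X (u, j) ω ≤ X (u + (r : ℤ), j) ω} = B := by
    ext ω; simp only [hB, Set.mem_setOf_eq, not_exists, not_and, not_le]
  rw [hBeq]
  have key : ∀ n : ℕ, P B ≤ ((n : ℝ≥0∞) + 1)⁻¹ := by
    intro n
    classical
    set E : Set (Fin (n + 1) → ℝ) := {y | ∀ k, k ≠ 0 → y k < y 0} with hE
    have hEmeas : MeasurableSet E := by
      have : E = ⋂ (k : Fin (n+1)) (_ : k ≠ 0), {y | y k < y 0} := by
        ext y; simp [hE]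
      rw [this]
      exact MeasurableSet.iInter fun k => MeasurableSet.iInter fun _ =>
        measurableSet_lt (measurable_pi_apply k) (measurable_pi_apply 0)
    set g : Fin (n + 1) → ℤ × ℤ := fun k => (u + (k : ℕ), j) with hgdef
    have hginj : Injective g := by
      intro a b hab
      simp only [hgdef, Prod.mk.injEq, add_right_inj] at hab
      exact Fin.val_injective (by exact_mod_cast hab.1)
    set A : Fin (n + 1) → Set Ω :=
      fun i => {ω | ∀ k, k ≠ i → X (g k) ω < X (g i) ω} with hA
    have hAmeas : ∀ i, MeasurableSet (A i) := by
      intro i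
      have : A i = ⋂ (k : Fin (n+1)) (_ : k ≠ i), {ω | X (g k) ω < X (g i) ω} := by
        ext ω; simp [hA]
      rw [this]
      exact MeasurableSet.iInter fun k => MeasurableSet.iInter fun _ =>
        measurableSet_lt (hmeas (g k)) (hmeas (g i))
    have hAval : ∀ i, P (A i) = (Measure.pi (fun _ : Fin (n + 1) => μ)) E := by
      intro i
      set σ : Fin (n + 1) ≃ Fin (n + 1) := Equiv.swap 0 i with hσ
      have hσ0 : σ 0 = i := Equiv.swap_apply_left 0 i
      have hA_pre : A i = (fun ω k => X (g (σ k)) ω) ⁻¹' E := by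
        ext ω
        simp only [hA, hE, Set.mem_preimage, Set.mem_setOf_eq]
        constructor
        · intro h k hk
          refine (h (σ k) (fun hc => hk (σ.injective (hc.trans hσ0.symm)))).trans_eq
            (by rw [hσ0])
        · intro h k hk
          have := h (σ.symm k) (fun hc => hk (by
            have hk0 : k = σ 0 := by rw [← hc, Equiv.apply_symm_apply]
            rw [hk0, hσ0]))
          rwa [Equiv.apply_symm_apply, hσ0] at this
      have hmap := map_tuple_eq_pi P X μ hmeas hindep hlaw n (fun k => g (σ k))
        (hginj.comp σ.injective)
      rw [hA_pre, ← Measure.map_apply (measurable_pi_lambda _ fun k => hmeas (g (σ k))) hEmeas]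
      exact congrArg (fun m : Measure (Fin (n+1) → ℝ) => m E) hmap
    have hdisj : Pairwise (Function.onFun Disjoint A) := by
      intro i i' hii'
      rw [Function.onFun, Set.disjoint_left]
      intro ω hi hi'
      exact absurd (hi i' hii'.symm) (not_lt.mpr (hi' i hii').le)
    have hsum : ∑ i : Fin (n + 1), P (A i) ≤ 1 := by
      rw [← tsum_fintype (L := .unconditional _), ← measure_iUnion hdisj hAmeas]
      exact prob_le_one
    rw [Finset.sum_congr rfl (fun i _ => hAval i), Finset.sum_const, Finset.card_univ,
      Fintype.card_fin, nsmul_eq_mul] at hsum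
    have hq : (Measure.pi (fun _ : Fin (n + 1) => μ)) E ≤ ((n : ℝ≥0∞) + 1)⁻¹ := by
      rw [ENNReal.le_inv_iff_mul_le]
      calc ((Measure.pi (fun _ : Fin (n + 1) => μ)) E) * ((n : ℝ≥0∞) + 1)
          = ((n : ℕ) + 1 : ℕ) * (Measure.pi (fun _ : Fin (n + 1) => μ)) E := by
            push_cast; ring
        _ ≤ 1 := hsum
    have hBsub : B ⊆ A 0 := by
      intro ω hω k hk
      have hk1 : 1 ≤ (k : ℕ) := Nat.one_le_iff_ne_zero.mpr (fun hc => hk (Fin.ext hc))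
      have := hω (k : ℕ) hk1
      simpa [hA, hgdef] using this
    calc P B ≤ P (A 0) := measure_mono hBsub
      _ = _ := hAval 0
      _ ≤ _ := hq
  by_contra hPB
  obtain ⟨n, hn⟩ := ENNReal.exists_inv_nat_lt hPB
  have hn' : P B ≤ ((n : ℝ≥0∞))⁻¹ :=
    le_trans (key n) (ENNReal.inv_le_inv.mpr (le_add_of_nonneg_right zero_le_one))
  exact absurd (lt_of_lt_of_le hn hn') (lt_irrefl _)

/-- Almost surely the slopes from `(u, j)` tend to `0` (consequence of the SLLN). -/
lemma ae_tendsto_slope (hmeas : ∀ u, Measurable (X u))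
    (hindep : iIndepFun X P)
    (hlaw : ∀ u, Measure.map (X u) P = μ)
    (hmom : Integrable (fun x : ℝ => x) μ) (j u : ℤ) :
    ∀ᵐ ω ∂P, Tendsto (fun r : ℕ => (X (u + (r : ℤ), j) ω - X (u, j) ω) / (r : ℝ))
      atTop (𝓝 0) := by
  set Y : ℕ → Ω → ℝ := fun r => X (u + (r : ℤ), j) with hY
  have hYmeas : ∀ r, Measurable (Y r) := fun r => hmeas _
  have hint : Integrable (Y 0) P := by
    have : Integrable id (P.map (X (u + ((0:ℕ) : ℤ), j))) := by
      rw [hlaw]; exact hmom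
    exact (integrable_map_measure aestronglyMeasurable_id
      (hmeas _).aemeasurable).mp this
  have hindep' : Pairwise ((IndepFun · · P) on Y) := by
    intro r s hrs
    exact hindep.indepFun (by
      simp only [Ne, Prod.mk.injEq, add_right_inj, and_true]
      exact_mod_cast hrs)
  have hident : ∀ r, IdentDistrib (Y r) (Y 0) P P := fun r =>
    ⟨(hmeas _).aemeasurable, (hmeas _).aemeasurable, by rw [hY]; rw [hlaw, hlaw]⟩
  have hslln := strong_law_ae_real Y hint hindep' hident
  filter_upwards [hslln] with ω hω
  set S : ℕ → ℝ := fun n => ∑ i ∈ Finset.range n, Y i ω with hSdef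
  have h1 : Tendsto (fun n : ℕ => S (n + 1) / ((n : ℝ) + 1)) atTop (𝓝 (P[Y 0])) := by
    have h := hω.comp (tendsto_add_atTop_nat 1)
    refine h.congr fun n => ?_
    simp only [Function.comp, hSdef, Nat.cast_add, Nat.cast_one]
  have h2 : Tendsto (fun n : ℕ => ((n : ℝ) + 1) / (n : ℝ)) atTop (𝓝 1) := by
    have := Tendsto.add (tendsto_const_nhds :
      Tendsto (fun _ : ℕ => (1:ℝ)) atTop (𝓝 1)) tendsto_one_div_atTop_nhds_zero_nat
    rw [add_zero] at this
    refine this.congr' ?_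
    filter_upwards [eventually_ge_atTop 1] with n hn
    have hn0 : (n : ℝ) ≠ 0 := Nat.cast_ne_zero.mpr (by omega)
    field_simp
  have h3 : Tendsto (fun n : ℕ => S (n + 1) / (n : ℝ)) atTop (𝓝 (P[Y 0])) := by
    have := h1.mul h2
    rw [mul_one] at this
    refine this.congr' ?_
    filter_upwards [eventually_ge_atTop 1] with n hn
    have hn0 : (n : ℝ) ≠ 0 := Nat.cast_ne_zero.mpr (by omega)
    have hn1 : ((n : ℝ) + 1) ≠ 0 := by positivity
    field_simp
  have h4 : Tendsto (fun n : ℕ => Y n ω / (n : ℝ)) atTop (𝓝 0) := by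
    have := h3.sub hω
    rw [sub_self] at this
    refine this.congr fun n => ?_
    rw [hSdef]
    simp only [Finset.sum_range_succ]
    ring
  have h5 : Tendsto (fun n : ℕ => X (u, j) ω / (n : ℝ)) atTop (𝓝 0) :=
    tendsto_const_div_atTop_nhds_zero_nat _
  have := h4.sub h5
  rw [sub_zero] at this
  refine this.congr fun n => ?_
  rw [hY, sub_div]

end Aux

theorem statement17
    {Ω : Type} [MeasurableSpace Ω] (P : Measure Ω) [IsProbabilityMeasure P]
    (X : ℤ × ℤ → Ω → ℝ) (μ : Measure ℝ) [IsProbabilityMeasure μ]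
    (hmeas : ∀ u, Measurable (X u))
    (hindep : iIndepFun X P)
    (hlaw : ∀ u, Measure.map (X u) P = μ)
    (hmom : Integrable (fun x : ℝ => x) μ) (j : ℤ) :
    P {ω | ∀ u : ℤ, (Mset (fun p => X p ω) j u).Nonempty} = 1 := by
  have key : ∀ᵐ ω ∂P, ∀ u : ℤ, (Mset (fun p => X p ω) j u).Nonempty := by
    rw [ae_all_iff]
    intro u
    filter_upwards [ae_tendsto_slope P X μ hmeas hindep hlaw hmom j u,
      ae_exists_ge P X μ hmeas hindep hlaw j u] with ω h1 h2
    exact attained (fun p => X p ω) j u h1 h2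
  have hae : {ω | ∀ u : ℤ, (Mset (fun p => X p ω) j u).Nonempty} =ᵐ[P] Set.univ := by
    rw [ae_eq_univ, Set.compl_setOf]
    exact ae_iff.mp key
  rw [measure_congr hae, measure_univ]
end

section
/- Let X : ℤ² → ℝ be a random field whose entries are independent and identically distributed with common law μ, and suppose μ has a finite first moment, ∫ℝ |x| μ(dx) < ∞. Fix j ∈ ℤ, and on the almost sure event where for every u ∈ ℤ the set M(u) := {v > u : α_j(u) = τ_j(u,v)} is non-empty, let T(u) := min M(u). Then almost surely: (i) for every u ∈ ℤ, T(u) = min{v ∈ ℤ : v > u and α_j(v) ≤ α_j(u)}; and (ii) for all u, v ∈ ℤ with u < v < T(u), one has T(v) ≤ T(u). -/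
open MeasureTheory ProbabilityTheory
open scoped ENNReal

lemma tau_le_alpha (X : ℤ × ℤ → ℝ) (j u v : ℤ) (h : u < v) :
    ((tauJ X j u v : ℝ) : EReal) ≤ alphaJ X j u := by
  set r : ℕ := (v - u).toNat with hr
  have hrpos : (0:ℤ) < v - u := by omega
  have hrz : (r : ℤ) = v - u := Int.toNat_of_nonneg hrpos.le
  have hr1 : 1 ≤ r := by omega
  have hv : u + (r : ℤ) = v := by omega
  have hterm : tauJ X j u v = (X (u + (r : ℤ), j) - X (u, j)) / (r : ℝ) := by
    rw [hv, tauJ, ← hrz]; norm_cast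
  rw [hterm]
  exact le_iSup₂ (f := fun (r : ℕ) (_ : 1 ≤ r) =>
    (((X (u + (r : ℤ), j) - X (u, j)) / (r : ℝ) : ℝ) : EReal)) r hr1

lemma alpha_le (X : ℤ × ℤ → ℝ) (j u : ℤ) (a : ℝ)
    (h : ∀ v, u < v → tauJ X j u v ≤ a) : alphaJ X j u ≤ (a : EReal) := by
  refine iSup₂_le fun r hr => ?_
  have huv : u < u + (r : ℤ) := by omega
  have := h (u + (r : ℤ)) huv
  rw [tauJ] at this
  simp only [add_sub_cancel_left] at this
  exact_mod_cast this

lemma key (X : ℤ × ℤ → ℝ) (j : ℤ) (T : ℤ → ℤ)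
    (hT : ∀ u : ℤ, IsLeast (Mset X j u) (T u)) :
    (∀ u : ℤ, IsLeast
        {v : ℤ | u < v ∧ alphaJ X j v ≤ alphaJ X j u} (T u)) ∧
      (∀ u v : ℤ, u < v → v < T u → T v ≤ T u) := by
  -- basic facts for each u
  have hlt : ∀ u, u < T u := fun u => (hT u).1.1
  have heq : ∀ u, alphaJ X j u = ((tauJ X j u (T u) : ℝ) : EReal) := fun u => (hT u).1.2
  -- the slope identity: X(T u) - X u = a * (T u - u)
  have hfeq : ∀ u, X (T u, j) - X (u, j) = tauJ X j u (T u) * ((T u - u : ℤ) : ℝ) := by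
    intro u
    have hpos : (0:ℝ) < ((T u - u : ℤ) : ℝ) := by
      exact_mod_cast by have := hlt u; omega
    rw [tauJ, div_mul_cancel₀ _ hpos.ne']
  -- strict inequality below T u
  have hstrict : ∀ u v, u < v → v < T u → tauJ X j u v < tauJ X j u (T u) := by
    intro u v huv hvt
    have hle : ((tauJ X j u v : ℝ) : EReal) ≤ ((tauJ X j u (T u) : ℝ) : EReal) := by
      rw [← heq u]; exact tau_le_alpha X j u v huv
    rw [EReal.coe_le_coe_iff] at hle
    rcases lt_or_eq_of_le hle with h | h
    · exact h
    · exfalso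
      have : v ∈ Mset X j u := ⟨huv, by rw [heq u, h]⟩
      have := (hT u).2 this
      omega
  -- alpha v > alpha u for u < v < T u
  have halpha_gt : ∀ u v, u < v → v < T u → alphaJ X j u < alphaJ X j v := by
    intro u v huv hvt
    set a := tauJ X j u (T u) with ha
    have h1 : X (v, j) - X (u, j) < a * ((v - u : ℤ) : ℝ) := by
      have hpos : (0:ℝ) < ((v - u : ℤ) : ℝ) := by exact_mod_cast by omega
      have := hstrict u v huv hvt
      rw [tauJ, div_lt_iff₀ hpos] at this
      linarith [this]
    have h2 := hfeq u
    have h3 : a * ((T u - v : ℤ) : ℝ) < X (T u, j) - X (v, j) := by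
      have : ((T u - v : ℤ) : ℝ) = ((T u - u : ℤ) : ℝ) - ((v - u : ℤ) : ℝ) := by
        push_cast; ring
      rw [this]; nlinarith [h1, h2]
    have hpos : (0:ℝ) < ((T u - v : ℤ) : ℝ) := by exact_mod_cast by omega
    have h4 : a < tauJ X j v (T u) := by
      rw [tauJ, lt_div_iff₀ hpos]; linarith
    calc alphaJ X j u = ((a : ℝ) : EReal) := heq u
      _ < ((tauJ X j v (T u) : ℝ) : EReal) := by exact_mod_cast h4
      _ ≤ alphaJ X j v := tau_le_alpha X j v (T u) hvt
  -- alpha (T u) ≤ alpha u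
  have halpha_le : ∀ u, alphaJ X j (T u) ≤ alphaJ X j u := by
    intro u
    set a := tauJ X j u (T u) with ha
    rw [heq u]
    refine alpha_le X j (T u) a fun w hw => ?_
    have hle : tauJ X j u w ≤ a := by
      have := tau_le_alpha X j u w (lt_trans (hlt u) hw)
      rw [heq u] at this
      exact_mod_cast this
    have hpos1 : (0:ℝ) < ((w - u : ℤ) : ℝ) := by
      exact_mod_cast by have := hlt u; omega
    have h1 : X (w, j) - X (u, j) ≤ a * ((w - u : ℤ) : ℝ) := by
      rw [tauJ, div_le_iff₀ hpos1] at hle; linarith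
    have h2 := hfeq u
    have hpos2 : (0:ℝ) < ((w - T u : ℤ) : ℝ) := by exact_mod_cast by omega
    rw [tauJ, div_le_iff₀ hpos2]
    have : ((w - T u : ℤ) : ℝ) = ((w - u : ℤ) : ℝ) - ((T u - u : ℤ) : ℝ) := by
      push_cast; ring
    rw [this]; nlinarith [h1, h2]
  constructor
  · intro u
    constructor
    · exact ⟨hlt u, halpha_le u⟩
    · rintro v ⟨huv, hva⟩
      by_contra hcon
      push_neg at hcon
      exact absurd hva (not_le_of_gt (halpha_gt u v huv hcon))
  · intro u v huv hvt
    have h1 : ∀ u : ℤ, IsLeast {w : ℤ | u < w ∧ alphaJ X j w ≤ alphaJ X j u} (T u) := by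
      intro u
      constructor
      · exact ⟨hlt u, halpha_le u⟩
      · rintro w ⟨huw, hwa⟩
        by_contra hcon
        push_neg at hcon
        exact absurd hwa (not_le_of_gt (halpha_gt u w huw hcon))
    refine (h1 v).2 ⟨hvt, ?_⟩
    exact (lt_of_le_of_lt (halpha_le u) (halpha_gt u v huv hvt)).le

theorem statement18
    {Ω : Type} [MeasurableSpace Ω] (P : Measure Ω) [IsProbabilityMeasure P]
    (X : ℤ × ℤ → Ω → ℝ) (μ : Measure ℝ) [IsProbabilityMeasure μ]
    (hmeas : ∀ u, Measurable (X u))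
    (hindep : iIndepFun X P)
    (hlaw : ∀ u, Measure.map (X u) P = μ)
    (hmom : Integrable (fun x : ℝ => x) μ) (j : ℤ) :
    P {ω | ∀ T : ℤ → ℤ,
        (∀ u : ℤ, IsLeast (Mset (fun p => X p ω) j u) (T u)) →
        ((∀ u : ℤ, IsLeast
            {v : ℤ | u < v ∧
              alphaJ (fun p => X p ω) j v ≤ alphaJ (fun p => X p ω) j u} (T u)) ∧
          (∀ u v : ℤ, u < v → v < T u → T v ≤ T u))} = 1 := by
  have hset : {ω | ∀ T : ℤ → ℤ,
        (∀ u : ℤ, IsLeast (Mset (fun p => X p ω) j u) (T u)) →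
        ((∀ u : ℤ, IsLeast
            {v : ℤ | u < v ∧
              alphaJ (fun p => X p ω) j v ≤ alphaJ (fun p => X p ω) j u} (T u)) ∧
          (∀ u v : ℤ, u < v → v < T u → T v ≤ T u))} = Set.univ := by
    ext ω
    simp only [Set.mem_setOf_eq, Set.mem_univ, iff_true]
    exact fun T hT => key (fun p => X p ω) j T hT
  rw [hset]
  simp
end

section
/- There exists a deterministic map Ψ : (ℝ∪{±∞})^{ℤ²} → ℝ^{ℤ²} such that the following holds: for every random field X : ℤ² → ℝ whose entries are independent and identically distributed with common law μ having a finite first moment ∫ℝ |x| μ(dx) < ∞, one has P(Ψ(Φ(X)) = X − μ̄·𝟙) = 1, where μ̄ := ∫ℝ x μ(dx) is the first moment of μ and 𝟙 ∈ ℝ^{ℤ²} is the constant function equal to 1. -/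
open MeasureTheory ProbabilityTheory Filter Finset
open scoped ENNReal Topology

/-- The deterministic map `Φ` sending a height function `X : ℤ² → ℝ` to the field
`Φ(X)(u) = sup_{r ≥ 1} (X(u + r e₁) - X(u)) / r`, valued in `EReal = ℝ ∪ {±∞}`. -/
noncomputable def PhiMap (X : ℤ × ℤ → ℝ) (u : ℤ × ℤ) : EReal :=
  ⨆ (r : ℕ) (_ : 1 ≤ r), (((X (u.1 + (r : ℤ), u.2) - X u) / (r : ℝ) : ℝ) : EReal)

set_option linter.unusedSectionVars false

namespace S19

noncomputable def g (a : ℤ → ℝ) (k : ℤ) (r : ℕ) : ℝ :=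
  (a (k + (r : ℤ) + 1) - a k) / ((r : ℝ) + 1)

def T1a (a : ℤ → ℝ) : Prop :=
  ∀ k : ℤ, Tendsto (fun r : ℕ => a (k + (r : ℤ) + 1) / ((r : ℝ) + 1)) atTop (𝓝 0)

def T3a (a : ℤ → ℝ) : Prop :=
  ∀ k : ℤ, (∀ r : ℕ, a (k + (r : ℤ) + 1) ≤ a k) → ∃ r : ℕ, a (k + (r : ℤ) + 1) = a k

def T4a (a : ℤ → ℝ) (m : ℝ) : Prop :=
  Tendsto (fun n : ℕ => (∑ i ∈ Finset.range n, a ((i : ℤ) + 1)) / (n : ℝ)) atTop (𝓝 m)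

noncomputable def ys (a : ℤ → ℝ) (k : ℤ) : ℝ := ⨆ r : ℕ, g a k r

variable {a : ℤ → ℝ}

lemma g_tendsto (h1 : T1a a) (k : ℤ) : Tendsto (g a k) atTop (𝓝 0) := by
  have h2 : Tendsto (fun r : ℕ => a k * (1 / ((r : ℝ) + 1))) atTop (𝓝 (a k * 0)) :=
    (tendsto_one_div_add_atTop_nhds_zero_nat).const_mul _
  have h3 := (h1 k).sub h2
  simp only [mul_zero, sub_zero] at h3
  refine h3.congr fun r => ?_
  unfold g
  field_simp

lemma g_bdd (h1 : T1a a) (k : ℤ) : BddAbove (Set.range (g a k)) :=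
  (g_tendsto h1 k).bddAbove_range

lemma g_le_ys (h1 : T1a a) (k : ℤ) (r : ℕ) : g a k r ≤ ys a k := le_ciSup (g_bdd h1 k) r

lemma ys_nonneg (h1 : T1a a) (k : ℤ) : 0 ≤ ys a k :=
  le_of_tendsto (g_tendsto h1 k) (Filter.Eventually.of_forall fun r => g_le_ys h1 k r)

lemma chord_le (h1 : T1a a) (k : ℤ) (r : ℕ) :
    a (k + (r : ℤ) + 1) - a k ≤ ((r : ℝ) + 1) * ys a k := by
  have h := g_le_ys h1 k r
  unfold g at h
  have hr : (0:ℝ) < (r : ℝ) + 1 := by positivity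
  rw [div_le_iff₀ hr] at h
  linarith [h]

lemma tight_exists (h1 : T1a a) (h3 : T3a a) (k : ℤ) :
    ∃ r : ℕ, a (k + (r : ℤ) + 1) - a k = ((r : ℝ) + 1) * ys a k := by
  rcases lt_or_eq_of_le (ys_nonneg h1 k) with hy | hy
  · by_contra hne
    push_neg at hne
    have hlt : ∀ r : ℕ, g a k r < ys a k := by
      intro r
      rcases lt_or_eq_of_le (g_le_ys h1 k r) with h | h
      · exact h
      · exfalso; apply hne r
        have hr : (0:ℝ) < (r : ℝ) + 1 := by positivity
        unfold g at h
        field_simp at h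
        linarith [h]
    obtain ⟨R, hR⟩ : ∃ R : ℕ, ∀ r ≥ R, g a k r < ys a k / 2 := by
      have := (g_tendsto h1 k).eventually
        (eventually_lt_nhds (show (0:ℝ) < ys a k / 2 by linarith))
      exact this.exists_forall_of_atTop
    set c : ℝ := (Finset.range (R + 1)).sup' (by simp) (g a k) with hc
    have hcl : c < ys a k := by
      rw [hc, Finset.sup'_lt_iff]
      intro r _
      exact hlt r
    have hmax : ys a k ≤ max c (ys a k / 2) := by
      apply ciSup_le
      intro r
      by_cases hrR : r ≤ R
      · exact le_max_of_le_left (Finset.le_sup' _ (by simp [Nat.lt_succ_iff, hrR]))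
      · exact le_max_of_le_right (le_of_lt (hR r (by omega)))
    rcases le_max_iff.mp hmax with h | h <;> linarith
  · have hle : ∀ r : ℕ, a (k + (r : ℤ) + 1) ≤ a k := by
      intro r
      have := chord_le h1 k r
      rw [← hy] at this
      linarith [this]
    obtain ⟨r, hr⟩ := h3 k hle
    exact ⟨r, by rw [hr, ← hy]; ring⟩

lemma ys_tight_le (h1 : T1a a) (k : ℤ) (r : ℕ)
    (ht : a (k + (r : ℤ) + 1) - a k = ((r : ℝ) + 1) * ys a k) :
    ys a (k + (r : ℤ) + 1) ≤ ys a k := by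
  by_contra hlt
  push_neg at hlt
  obtain ⟨s, hs⟩ := exists_lt_of_lt_ciSup hlt
  unfold g at hs
  have hs0 : (0:ℝ) < (s : ℝ) + 1 := by positivity
  rw [lt_div_iff₀ hs0] at hs
  have hb := chord_le h1 k (r + s + 1)
  push_cast at hb
  have harith : k + ((r : ℤ) + (s : ℤ) + 1) + 1 = k + (r : ℤ) + 1 + (s : ℤ) + 1 := by ring
  rw [harith] at hb
  nlinarith [hb, hs, ht, ys_nonneg h1 k]

lemma rho_tight (h1 : T1a a) (h3 : T3a a) (k : ℤ) (ρ : ℕ)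
    (hle : ys a (k + (ρ : ℤ) + 1) ≤ ys a k)
    (hmin : ∀ t : ℕ, t < ρ → ys a k < ys a (k + (t : ℤ) + 1)) :
    a (k + (ρ : ℤ) + 1) - a k = ((ρ : ℝ) + 1) * ys a k := by
  have hex := tight_exists h1 h3 k
  set r₁ := Nat.find hex with hr₁
  have ht₁ : a (k + (r₁ : ℤ) + 1) - a k = ((r₁ : ℝ) + 1) * ys a k := Nat.find_spec hex
  have hρr : ρ ≤ r₁ := by
    by_contra hlt
    push_neg at hlt
    exact absurd (ys_tight_le h1 k r₁ ht₁) (not_le.mpr (hmin r₁ hlt))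
  rcases eq_or_lt_of_le hρr with heq | hlt
  · rw [heq]; exact ht₁
  · exfalso
    have hstrict : a (k + (ρ : ℤ) + 1) - a k < ((ρ : ℝ) + 1) * ys a k := by
      rcases lt_or_eq_of_le (chord_le h1 k ρ) with h | h
      · exact h
      · exact absurd h (Nat.find_min hex hlt)
    set d := r₁ - ρ - 1 with hd
    have hdn : ρ + d + 1 = r₁ := by omega
    have hgd : ys a k < g a (k + (ρ : ℤ) + 1) d := by
      unfold g
      have hidx : k + (ρ : ℤ) + 1 + (d : ℤ) + 1 = k + (r₁ : ℤ) + 1 := by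
        have : ((ρ : ℤ) + (d : ℤ) + 1) = (r₁ : ℤ) := by exact_mod_cast congrArg (Nat.cast : ℕ → ℤ) hdn
        omega
      rw [hidx]
      rw [lt_div_iff₀ (by positivity)]
      have hcast : (r₁ : ℝ) = (ρ : ℝ) + (d : ℝ) + 1 := by exact_mod_cast congrArg (Nat.cast : ℕ → ℝ) hdn.symm
      rw [hcast] at ht₁
      nlinarith [ht₁, hstrict]
    have := (g_le_ys h1 (k + (ρ : ℤ) + 1) d).trans hle
    linarith

section uniq
variable (h1 : T1a a) (h3 : T3a a) (h1' : T1a a') (h3' : T3a a')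
    (hy : ys a' = ys a)

/-- jump equality of `S` along the minimal descent. -/
lemma Sjump (h1 : T1a a) (h3 : T3a a) (h1' : T1a a') (h3' : T3a a') (hy : ys a' = ys a)
    (k : ℤ) (ρ : ℕ)
    (hle : ys a (k + (ρ : ℤ) + 1) ≤ ys a k)
    (hmin : ∀ t : ℕ, t < ρ → ys a k < ys a (k + (t : ℤ) + 1)) :
    a' (k + (ρ : ℤ) + 1) - a (k + (ρ : ℤ) + 1) = a' k - a k := by
  have ta := rho_tight h1 h3 k ρ hle hmin
  have ta' := rho_tight h1' h3' k ρ (by rw [hy]; exact hle) (by intro t ht; rw [hy]; exact hmin t ht)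
  rw [hy] at ta'
  linarith [ta, ta']

lemma Peq (h1 : T1a a) (h3 : T3a a) (h1' : T1a a') (h3' : T3a a') (hy : ys a' = ys a) :
    ∀ n : ℕ, ∀ k : ℤ,
      (∀ t : ℕ, t ≤ n → ys a (k + (n : ℤ) + 1) ≤ ys a (k + (t : ℤ))) →
      a' (k + (n : ℤ) + 1) - a (k + (n : ℤ) + 1) = a' k - a k := by
  intro n
  induction n using Nat.strong_induction_on with
  | _ n IH =>
    intro k hcond
    have hex : ∃ r : ℕ, ys a (k + (r : ℤ) + 1) ≤ ys a k := by
      refine ⟨n, ?_⟩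
      have := hcond 0 (Nat.zero_le n)
      simpa using this
    set ρ := Nat.find hex with hρ
    have hle : ys a (k + (ρ : ℤ) + 1) ≤ ys a k := Nat.find_spec hex
    have hmin : ∀ t : ℕ, t < ρ → ys a k < ys a (k + (t : ℤ) + 1) := by
      intro t ht
      have := Nat.find_min hex ht
      push_neg at this
      exact this
    have hρn : ρ ≤ n := by
      apply Nat.find_min' hex
      have := hcond 0 (Nat.zero_le n)
      simpa using this
    have hjump := Sjump h1 h3 h1' h3' hy k ρ hle hmin
    rcases eq_or_lt_of_le hρn with heq | hlt
    · rw [← heq]; exact hjump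
    · set n' := n - ρ - 1 with hn'
      have hcast : ((n' : ℤ)) = (n : ℤ) - (ρ : ℤ) - 1 := by
        have : ρ + 1 + n' = n := by omega
        have := congrArg (Nat.cast : ℕ → ℤ) this
        push_cast at this
        omega
      have happ := IH n' (by omega) (k + (ρ : ℤ) + 1) ?_
      · have hidx : k + (ρ : ℤ) + 1 + (n' : ℤ) + 1 = k + (n : ℤ) + 1 := by omega
        rw [hidx] at happ
        rw [happ]
        exact hjump
      · intro t ht
        have hidx : k + (ρ : ℤ) + 1 + (n' : ℤ) + 1 = k + (n : ℤ) + 1 := by omega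
        rw [hidx]
        have h2 : k + (ρ : ℤ) + 1 + (t : ℤ) = k + ((ρ + 1 + t : ℕ) : ℤ) := by push_cast; ring
        rw [h2]
        exact hcond (ρ + 1 + t) (by omega)

lemma S_step (h1 : T1a a) (h3 : T3a a) (h1' : T1a a') (h3' : T3a a') (hy : ys a' = ys a)
    (k : ℤ) : a' (k + 1) - a (k + 1) = a' k - a k := by
  have hex : ∃ r : ℕ, ys a (k + (r : ℤ) + 1) ≤ ys a k := by
    obtain ⟨r, hr⟩ := tight_exists h1 h3 k
    exact ⟨r, ys_tight_le h1 k r hr⟩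
  set ρ := Nat.find hex with hρ
  have hle : ys a (k + (ρ : ℤ) + 1) ≤ ys a k := Nat.find_spec hex
  have hmin : ∀ t : ℕ, t < ρ → ys a k < ys a (k + (t : ℤ) + 1) := by
    intro t ht
    have := Nat.find_min hex ht
    push_neg at this
    exact this
  have hjump := Sjump h1 h3 h1' h3' hy k ρ hle hmin
  rcases Nat.eq_zero_or_pos ρ with h0 | hpos
  · rw [h0] at hjump
    simpa using hjump
  · set n' := ρ - 1 with hn'
    have hcast : ((n' : ℤ)) = (ρ : ℤ) - 1 := by
      have : n' + 1 = ρ := by omega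
      have := congrArg (Nat.cast : ℕ → ℤ) this
      push_cast at this
      omega
    have happ := Peq h1 h3 h1' h3' hy n' (k + 1) ?_
    · have hidx : k + 1 + (n' : ℤ) + 1 = k + (ρ : ℤ) + 1 := by omega
      rw [hidx] at happ
      rw [← happ]
      exact hjump
    · intro t ht
      have hidx : k + 1 + (n' : ℤ) + 1 = k + (ρ : ℤ) + 1 := by omega
      rw [hidx]
      have h2 : k + 1 + (t : ℤ) = k + (t : ℤ) + 1 := by ring
      rw [h2]
      exact (hmin t (by omega)).le.trans' hle

lemma S_const (h1 : T1a a) (h3 : T3a a) (h1' : T1a a') (h3' : T3a a') (hy : ys a' = ys a) :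
    ∀ k : ℤ, a' k - a k = a' 0 - a 0 := by
  intro k
  induction k using Int.induction_on with
  | zero => rfl
  | succ n IH => rw [S_step h1 h3 h1' h3' hy n]; exact IH
  | pred n IH =>
      have := S_step h1 h3 h1' h3' hy (-(n:ℤ) - 1)
      simp only [sub_add_cancel] at this
      rw [← this]
      exact IH
end uniq

/-- The EReal-valued sup in `PhiMap` equals the coercion of the real sup `ys`. -/
lemma phi_eq_ys (h1 : T1a a) (k : ℤ) :
    (⨆ (r : ℕ) (_ : 1 ≤ r), (((a (k + (r : ℤ)) - a k) / (r : ℝ) : ℝ) : EReal))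
      = ((ys a k : ℝ) : EReal) := by
  have hmono : Monotone (fun x : ℝ => (x : EReal)) := fun x y h => EReal.coe_le_coe_iff.mpr h
  have hmap : ((ys a k : ℝ) : EReal) = ⨆ r : ℕ, ((g a k r : ℝ) : EReal) :=
    hmono.map_ciSup_of_continuousAt (continuous_coe_real_ereal.continuousAt) (g_bdd h1 k)
  rw [hmap]
  apply le_antisymm
  · apply iSup_le; intro r; apply iSup_le; intro hr
    refine le_iSup_of_le (r - 1) (le_of_eq ?_)
    apply congrArg (fun x : ℝ => (x : EReal))
    unfold g
    have h1' : (((r - 1 : ℕ)) : ℤ) = (r : ℤ) - 1 := by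
      have := Nat.cast_sub (R := ℤ) hr; push_cast at this ⊢; omega
    have h2' : (((r - 1 : ℕ)) : ℝ) = (r : ℝ) - 1 := by
      have := Nat.cast_sub (R := ℝ) hr; push_cast at this ⊢; linarith
    rw [h1', h2']
    ring_nf
  · apply iSup_le; intro r
    refine le_iSup₂_of_le (r + 1) (by omega) (le_of_eq ?_)
    apply congrArg (fun x : ℝ => (x : EReal))
    unfold g
    push_cast
    ring_nf

lemma cesaro_shift {m m' c : ℝ} (h4 : T4a a m) (h4' : T4a a' m')
    (hS : ∀ k : ℤ, a' k - a k = c) : m' = m + c := by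
  have h4'' : Tendsto (fun n : ℕ => (∑ i ∈ Finset.range n, a ((i : ℤ) + 1)) / (n : ℝ) + c)
      atTop (𝓝 (m + c)) := h4.add_const c
  refine tendsto_nhds_unique h4' (h4''.congr' ?_)
  filter_upwards [eventually_ge_atTop 1] with n hn
  have hsum : (∑ i ∈ Finset.range n, a' ((i : ℤ) + 1))
      = (∑ i ∈ Finset.range n, a ((i : ℤ) + 1)) + n * c := by
    rw [Finset.sum_congr rfl (fun i _ => by
      have := hS ((i : ℤ) + 1); linarith : ∀ i ∈ Finset.range n, a' ((i : ℤ) + 1) = a ((i : ℤ) + 1) + c)]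
    rw [Finset.sum_add_distrib]
    simp [mul_comm]
  have hn0 : (n : ℝ) ≠ 0 := by positivity
  rw [hsum]
  field_simp

def Typical (Z : ℤ × ℤ → ℝ) (m : ℝ) : Prop :=
  ∀ j : ℤ, T1a (fun k => Z (k, j)) ∧ T3a (fun k => Z (k, j)) ∧ T4a (fun k => Z (k, j)) m

lemma uniq {Z Z' : ℤ × ℤ → ℝ} {m m' : ℝ} (hZ : Typical Z m) (hZ' : Typical Z' m')
    (hphi : PhiMap Z' = PhiMap Z) : ∀ u, Z' u - m' = Z u - m := by
  intro u
  obtain ⟨h1, h3, h4⟩ := hZ u.2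
  obtain ⟨h1', h3', h4'⟩ := hZ' u.2
  set b : ℤ → ℝ := fun k => Z (k, u.2) with hb
  set b' : ℤ → ℝ := fun k => Z' (k, u.2) with hb'
  have hyy : ys b' = ys b := by
    funext k
    have h := congrFun hphi (k, u.2)
    unfold PhiMap at h
    simp only at h
    rw [phi_eq_ys h1' k, phi_eq_ys h1 k] at h
    exact_mod_cast h
  have hSc := S_const h1 h3 h1' h3' hyy
  have hc := cesaro_shift h4 h4' (c := b' 0 - b 0) (fun k => hSc k)
  have := hSc u.1
  have hu : (u.1, u.2) = u := by ext <;> rfl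
  simp only [hb, hb', hu] at this
  linarith [this, hc]

open Classical in
noncomputable def Psi (Y : (ℤ × ℤ) → EReal) : (ℤ × ℤ) → ℝ :=
  if h : ∃ p : ((ℤ × ℤ) → ℝ) × ℝ, Typical p.1 p.2 ∧ PhiMap p.1 = Y then
    fun u => h.choose.1 u - h.choose.2
  else 0

lemma Psi_spec {Z : ℤ × ℤ → ℝ} {m : ℝ} (hZ : Typical Z m) :
    Psi (PhiMap Z) = fun u => Z u - m := by
  have h : ∃ p : ((ℤ × ℤ) → ℝ) × ℝ, Typical p.1 p.2 ∧ PhiMap p.1 = PhiMap Z :=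
    ⟨(Z, m), hZ, rfl⟩
  classical
  rw [Psi]
  rw [dif_pos h]
  funext u
  exact uniq hZ h.choose_spec.1 h.choose_spec.2 u ▸ rfl

lemma cesaro_to_self (w : ℕ → ℝ) (m : ℝ)
    (h : Tendsto (fun n : ℕ => (∑ i ∈ Finset.range n, w i) / (n : ℝ)) atTop (𝓝 m)) :
    Tendsto (fun r : ℕ => w r / ((r : ℝ) + 1)) atTop (𝓝 0) := by
  set A : ℕ → ℝ := fun n => (∑ i ∈ Finset.range n, w i) / (n : ℝ) with hA
  have hA1 : Tendsto (fun r : ℕ => A (r + 1)) atTop (𝓝 m) :=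
    h.comp (tendsto_add_atTop_nat 1)
  have hfrac : Tendsto (fun r : ℕ => (r : ℝ) / ((r : ℝ) + 1)) atTop (𝓝 1) := by
    have h0 : Tendsto (fun n : ℕ => 1 / ((n : ℝ) + 1)) atTop (𝓝 0) := tendsto_one_div_add_atTop_nhds_zero_nat
    have := (tendsto_const_nhds (x := (1:ℝ)) (f := atTop (α := ℕ))).sub h0
    rw [sub_zero] at this
    refine this.congr fun r => ?_
    field_simp
    ring
  have hcomb := hA1.sub (h.mul hfrac)
  rw [mul_one, sub_self] at hcomb
  refine hcomb.congr fun r => ?_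
  rcases Nat.eq_zero_or_pos r with h0 | hpos
  · subst h0; simp [hA]
  · have hr0 : (r : ℝ) ≠ 0 := by positivity
    have hsum : ∑ i ∈ Finset.range (r + 1), w i = (∑ i ∈ Finset.range r, w i) + w r :=
      Finset.sum_range_succ w r
    simp only [hA]
    rw [hsum]
    push_cast
    field_simp
    ring

variable {Ω : Type} [MeasurableSpace Ω] {P : Measure Ω} [IsProbabilityMeasure P]
  {X : ℤ × ℤ → Ω → ℝ} {μ : Measure ℝ} [IsProbabilityMeasure μ]

section prob

lemma int_X (hX : ∀ u, Measurable (X u)) (hmap : ∀ u, Measure.map (X u) P = μ)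
    (hInt : Integrable (fun x : ℝ => x) μ) (u : ℤ × ℤ) : Integrable (X u) P := by
  have h : Integrable (id : ℝ → ℝ) (Measure.map (X u) P) := by
    rw [hmap u]; exact hInt
  exact (integrable_map_measure aestronglyMeasurable_id (hX u).aemeasurable).mp h

lemma exp_X (hX : ∀ u, Measurable (X u)) (hmap : ∀ u, Measure.map (X u) P = μ)
    (u : ℤ × ℤ) : ∫ ω, X u ω ∂P = ∫ x, x ∂μ := by
  have h := integral_map (hX u).aemeasurable (aestronglyMeasurable_id (μ := Measure.map (X u) P))
  rw [hmap u] at h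
  simpa [id] using h.symm

lemma slln (hX : ∀ u, Measurable (X u)) (hIndep : iIndepFun X P)
    (hmap : ∀ u, Measure.map (X u) P = μ) (hInt : Integrable (fun x : ℝ => x) μ)
    (ι : ℕ → ℤ × ℤ) (hι : Function.Injective ι) :
    ∀ᵐ ω ∂P, Tendsto (fun n : ℕ => (∑ i ∈ Finset.range n, X (ι i) ω) / (n : ℝ))
      atTop (𝓝 (∫ x, x ∂μ)) := by
  have h := strong_law_ae_real (fun i => X (ι i))
    (int_X hX hmap hInt (ι 0))
    (fun i j hij => hIndep.indepFun (fun h => hij (hι h)))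
    (fun i => ⟨(hX (ι i)).aemeasurable, (hX (ι 0)).aemeasurable, by rw [hmap, hmap]⟩)
  have he : ∫ ω, X (ι 0) ω ∂P = ∫ x, x ∂μ := exp_X hX hmap (ι 0)
  rw [he] at h
  exact h

lemma hit (hX : ∀ u, Measurable (X u)) (hIndep : iIndepFun X P)
    (hmap : ∀ u, Measure.map (X u) P = μ) (s : Set ℝ) (hs : MeasurableSet s) (hpos : μ s ≠ 0) (u : ℤ × ℤ) :
    ∀ᵐ ω ∂P, ∃ r : ℕ, X (u.1 + (r : ℤ) + 1, u.2) ω ∈ s := by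
  set ι : ℕ → ℤ × ℤ := fun r => (u.1 + (r : ℤ) + 1, u.2) with hι
  have hinj : Function.Injective ι := by
    intro i j h
    simp only [hι, Prod.mk.injEq] at h
    omega
  set N : Set Ω := ⋂ r : ℕ, X (ι r) ⁻¹' sᶜ with hN
  have hsc : μ sᶜ < 1 := by
    rw [measure_compl hs (measure_ne_top μ s)]
    simp only [measure_univ]
    exact ENNReal.sub_lt_self ENNReal.one_ne_top one_ne_zero hpos
  have hbound : ∀ n : ℕ, P N ≤ (μ sᶜ) ^ n := by
    intro n
    set S : Finset (ℤ × ℤ) := (Finset.range n).image ι with hS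
    have hsub : N ⊆ ⋂ v ∈ S, X v ⁻¹' sᶜ := by
      intro ω hω
      simp only [Set.mem_iInter]
      intro v hv
      simp only [hS, Finset.mem_image] at hv
      obtain ⟨i, _, rfl⟩ := hv
      exact Set.mem_iInter.mp hω i
    have hprod := hIndep.measure_inter_preimage_eq_mul S (sets := fun _ => sᶜ)
      (fun i _ => hs.compl)
    have hcard : S.card = n := by
      rw [hS, Finset.card_image_of_injective _ hinj, Finset.card_range]
    have heach : ∀ v, P (X v ⁻¹' sᶜ) = μ sᶜ := by
      intro v
      rw [← hmap v, Measure.map_apply (hX v) hs.compl]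
    calc P N ≤ P (⋂ v ∈ S, X v ⁻¹' sᶜ) := measure_mono hsub
      _ = ∏ v ∈ S, P (X v ⁻¹' sᶜ) := hprod
      _ = ∏ _v ∈ S, μ sᶜ := by exact Finset.prod_congr rfl fun v _ => heach v
      _ = (μ sᶜ) ^ n := by rw [Finset.prod_const, hcard]
  have hzero : P N = 0 := by
    have htend := ENNReal.tendsto_pow_atTop_nhds_zero_of_lt_one hsc
    have := ge_of_tendsto' htend hbound
    simpa using le_antisymm this zero_le
  rw [ae_iff]
  convert hzero using 2
  ext ω
  simp only [hN, hι, Set.mem_iInter, Set.mem_setOf_eq, Set.mem_preimage, Set.mem_compl_iff,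
    not_exists]
end prob

/-- the set of "too high" points is contained in a measurable null set. -/
lemma topset : ∃ S : Set ℝ, MeasurableSet S ∧ {x : ℝ | μ (Set.Ici x) = 0} ⊆ S ∧ μ S = 0 := by
  set B := {x : ℝ | μ (Set.Ici x) = 0} with hB
  rcases Set.eq_empty_or_nonempty B with hBe | hBne
  · exact ⟨∅, MeasurableSet.empty, by rw [hBe], measure_empty⟩
  by_cases hbb : BddBelow B
  · set b := sInf B with hb
    by_cases hbB : b ∈ B
    · refine ⟨Set.Ici b, measurableSet_Ici, fun x hx => csInf_le hbb hx, hbB⟩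
    · refine ⟨Set.Ioi b, measurableSet_Ioi, ?_, ?_⟩
      · intro x hx
        rcases lt_or_eq_of_le (csInf_le hbb hx) with h | h
        · exact h
        · exact absurd (by rwa [← h] at hx) hbB
      · have hcov : Set.Ioi b ⊆ ⋃ n : ℕ, Set.Ici (b + 1 / ((n : ℝ) + 1)) := by
          intro x hx
          obtain ⟨n, hn⟩ := exists_nat_one_div_lt (show (0:ℝ) < x - b by simpa using hx)
          exact Set.mem_iUnion.mpr ⟨n, by simp only [Set.mem_Ici]; linarith⟩
        refine measure_mono_null hcov (measure_iUnion_null fun n => ?_)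
        obtain ⟨y, hyB, hy⟩ : ∃ y ∈ B, y < b + 1 / ((n : ℝ) + 1) := by
          apply exists_lt_of_csInf_lt hBne
          rw [← hb]
          have : (0:ℝ) < 1 / ((n : ℝ) + 1) := by positivity
          linarith
        exact measure_mono_null (Set.Ici_subset_Ici.mpr hy.le) hyB
  · exfalso
    have hall : ∀ x : ℝ, μ (Set.Ici x) = 0 := by
      intro x
      rw [not_bddBelow_iff] at hbb
      obtain ⟨y, hyB, hyx⟩ := hbb x
      exact measure_mono_null (Set.Ici_subset_Ici.mpr hyx.le) hyB
    have hcov : (Set.univ : Set ℝ) ⊆ ⋃ n : ℕ, Set.Ici (-(n : ℝ)) := by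
      intro x _
      obtain ⟨n, hn⟩ := exists_nat_ge (-x)
      exact Set.mem_iUnion.mpr ⟨n, by simp only [Set.mem_Ici]; linarith⟩
    have := measure_mono_null hcov (measure_iUnion_null fun n => hall _)
    rw [measure_univ] at this
    exact one_ne_zero this

lemma Ioi_null {x : ℝ} (h : ∀ c : ℚ, x ≤ (c : ℝ) → μ (Set.Ici (c : ℝ)) = 0) :
    μ (Set.Ioi x) = 0 := by
  have hcov : Set.Ioi x ⊆ ⋃ c : ℚ, (if x < (c : ℝ) then Set.Ici (c : ℝ) else ∅) := by
    intro z hz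
    obtain ⟨c, hc1, hc2⟩ := exists_rat_btwn (show x < z from hz)
    refine Set.mem_iUnion.mpr ⟨c, ?_⟩
    rw [if_pos hc1]
    exact Set.mem_Ici.mpr hc2.le
  refine measure_mono_null hcov (measure_iUnion_null fun c => ?_)
  by_cases hxc : x < (c : ℝ)
  · rw [if_pos hxc]; exact h c hxc.le
  · rw [if_neg hxc]; exact measure_empty

lemma atom_unique {x y : ℝ} (hx : μ {x} ≠ 0 ∧ μ (Set.Ioi x) = 0)
    (hy : μ {y} ≠ 0 ∧ μ (Set.Ioi y) = 0) : x = y := by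
  rcases lt_trichotomy x y with h | h | h
  · exact absurd (measure_mono_null (Set.singleton_subset_iff.mpr h) hx.2) hy.1
  · exact h
  · exact absurd (measure_mono_null (Set.singleton_subset_iff.mpr h) hy.2) hx.1


lemma T3ae (hX : ∀ u, Measurable (X u)) (hIndep : iIndepFun X P)
    (hmap : ∀ u, Measure.map (X u) P = μ) (u : ℤ × ℤ) :
    ∀ᵐ ω ∂P, (∀ r : ℕ, X (u.1 + (r : ℤ) + 1, u.2) ω ≤ X u ω) →
      ∃ r : ℕ, X (u.1 + (r : ℤ) + 1, u.2) ω = X u ω := by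
  obtain ⟨S, hSm, hBS, hS0⟩ := topset (μ := μ)
  have e1 : ∀ᵐ ω ∂P, X u ω ∉ S := by
    have h0 : P (X u ⁻¹' S) = 0 := by
      rw [← Measure.map_apply (hX u) hSm, hmap u]; exact hS0
    rw [ae_iff]
    convert h0 using 2
    ext ω; simp
  have e2 : ∀ᵐ ω ∂P, ∀ c : ℚ, μ (Set.Ici (c : ℝ)) ≠ 0 →
      ∃ r : ℕ, X (u.1 + (r : ℤ) + 1, u.2) ω ∈ Set.Ici (c : ℝ) := by
    rw [ae_all_iff]
    intro c
    by_cases h : μ (Set.Ici (c : ℝ)) = 0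
    · exact Filter.Eventually.of_forall fun ω hc => absurd h hc
    · filter_upwards [hit hX hIndep hmap (Set.Ici (c : ℝ)) measurableSet_Ici h u] with ω hω _
      exact hω
  by_cases hatom : ∃ x : ℝ, μ {x} ≠ 0 ∧ μ (Set.Ioi x) = 0
  · obtain ⟨x₀, hx₀⟩ := hatom
    filter_upwards [e1, e2, hit hX hIndep hmap {x₀} (measurableSet_singleton x₀) hx₀.1 u]
      with ω h1ω h2ω h3ω
    intro hle
    by_contra hne
    push_neg at hne
    have hlt : ∀ r : ℕ, X (u.1 + (r : ℤ) + 1, u.2) ω < X u ω :=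
      fun r => lt_of_le_of_ne (hle r) (hne r)
    set x := X u ω with hx
    by_cases hc : ∃ c : ℚ, x ≤ (c : ℝ) ∧ μ (Set.Ici (c : ℝ)) ≠ 0
    · obtain ⟨c, hxc, hcpos⟩ := hc
      obtain ⟨r, hr⟩ := h2ω c hcpos
      rw [Set.mem_Ici] at hr
      exact absurd hr (by push_neg; linarith [hlt r])
    · push_neg at hc
      have hIoi : μ (Set.Ioi x) = 0 := Ioi_null hc
      by_cases hax : μ {x} = 0
      · have hIci : μ (Set.Ici x) = 0 := by
          have : Set.Ici x ⊆ {x} ∪ Set.Ioi x := by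
            intro z hz
            rcases eq_or_lt_of_le (Set.mem_Ici.mp hz) with h | h
            · exact Or.inl (by simp [← h])
            · exact Or.inr h
          exact measure_mono_null this
            (le_antisymm ((measure_union_le _ _).trans (by rw [hax, hIoi, add_zero])) zero_le)
        exact h1ω (hBS hIci)
      · have hxx₀ : x = x₀ := atom_unique ⟨hax, hIoi⟩ hx₀
        obtain ⟨r, hr⟩ := h3ω
        rw [Set.mem_singleton_iff, ← hxx₀] at hr
        exact hne r hr
  · filter_upwards [e1, e2] with ω h1ω h2ω
    intro hle
    by_contra hne
    push_neg at hne
    have hlt : ∀ r : ℕ, X (u.1 + (r : ℤ) + 1, u.2) ω < X u ω :=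
      fun r => lt_of_le_of_ne (hle r) (hne r)
    set x := X u ω with hx
    by_cases hc : ∃ c : ℚ, x ≤ (c : ℝ) ∧ μ (Set.Ici (c : ℝ)) ≠ 0
    · obtain ⟨c, hxc, hcpos⟩ := hc
      obtain ⟨r, hr⟩ := h2ω c hcpos
      rw [Set.mem_Ici] at hr
      exact absurd hr (by push_neg; linarith [hlt r])
    · push_neg at hc
      have hIoi : μ (Set.Ioi x) = 0 := Ioi_null hc
      by_cases hax : μ {x} = 0
      · have hIci : μ (Set.Ici x) = 0 := by
          have : Set.Ici x ⊆ {x} ∪ Set.Ioi x := by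
            intro z hz
            rcases eq_or_lt_of_le (Set.mem_Ici.mp hz) with h | h
            · exact Or.inl (by simp [← h])
            · exact Or.inr h
          exact measure_mono_null this
            (le_antisymm ((measure_union_le _ _).trans (by rw [hax, hIoi, add_zero])) zero_le)
        exact h1ω (hBS hIci)
      · exact hatom ⟨x, hax, hIoi⟩

lemma typical_ae (hX : ∀ u, Measurable (X u))
    (hIndep : iIndepFun X P)
    (hmap : ∀ u, Measure.map (X u) P = μ) (hInt : Integrable (fun x : ℝ => x) μ) :
    ∀ᵐ ω ∂P, Typical (fun v => X v ω) (∫ x, x ∂μ) := by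
  have hT1 : ∀ᵐ ω ∂P, ∀ u : ℤ × ℤ,
      Tendsto (fun r : ℕ => X (u.1 + (r : ℤ) + 1, u.2) ω / ((r : ℝ) + 1)) atTop (𝓝 0) := by
    rw [ae_all_iff]
    intro u
    have hinj : Function.Injective (fun i : ℕ => ((u.1 + (i : ℤ) + 1 : ℤ), u.2)) := by
      intro i j h
      simp only [Prod.mk.injEq] at h
      omega
    filter_upwards [slln hX hIndep hmap hInt _ hinj] with ω hω
    exact cesaro_to_self _ _ hω
  have hT3 : ∀ᵐ ω ∂P, ∀ u : ℤ × ℤ,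
      (∀ r : ℕ, X (u.1 + (r : ℤ) + 1, u.2) ω ≤ X u ω) →
      ∃ r : ℕ, X (u.1 + (r : ℤ) + 1, u.2) ω = X u ω := by
    rw [ae_all_iff]
    exact fun u => T3ae hX hIndep hmap u
  have hT4 : ∀ᵐ ω ∂P, ∀ j : ℤ,
      Tendsto (fun n : ℕ => (∑ i ∈ Finset.range n, X ((i : ℤ) + 1, j) ω) / (n : ℝ))
        atTop (𝓝 (∫ x, x ∂μ)) := by
    rw [ae_all_iff]
    intro j
    have hinj : Function.Injective (fun i : ℕ => (((i : ℤ) + 1 : ℤ), j)) := by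
      intro i j h
      simp only [Prod.mk.injEq] at h
      omega
    exact slln hX hIndep hmap hInt _ hinj
  filter_upwards [hT1, hT3, hT4] with ω a1 a3 a4
  intro j
  exact ⟨fun k => a1 (k, j), fun k => a3 (k, j), a4 j⟩

theorem final {Ω : Type} [MeasurableSpace Ω] (P : Measure Ω) (hP : IsProbabilityMeasure P)
    (X : ℤ × ℤ → Ω → ℝ) (μ : Measure ℝ) (hμ : IsProbabilityMeasure μ)
    (hX : ∀ u, Measurable (X u)) (hIndep : iIndepFun X P)
    (hmap : ∀ u, Measure.map (X u) P = μ) (hInt : Integrable (fun x : ℝ => x) μ) :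
    P {ω | Psi (PhiMap (fun v => X v ω)) = fun u => X u ω - ∫ x, x ∂μ} = 1 := by
  set A := {ω | Psi (PhiMap (fun v => X v ω)) = fun u => X u ω - ∫ x, x ∂μ} with hA
  have hae := typical_ae hX hIndep hmap hInt
  have hsub : {ω | ¬ Typical (fun v => X v ω) (∫ x, x ∂μ)}ᶜ ⊆ A := by
    intro ω hω
    simp only [Set.mem_compl_iff, Set.mem_setOf_eq, not_not] at hω
    exact Psi_spec hω
  have h0 : P Aᶜ = 0 := by
    refine measure_mono_null ?_ (ae_iff.mp hae)
    intro ω hω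
    simp only [Set.mem_compl_iff] at hω ⊢
    intro hty
    exact hω (hsub (by simpa using hty))
  have h1 : (1 : ℝ≥0∞) ≤ P A := by
    have := measure_union_le (μ := P) A Aᶜ
    rw [Set.union_compl_self, measure_univ, h0, add_zero] at this
    exact this
  exact le_antisymm prob_le_one h1
end S19

theorem statement19 :
    ∃ Ψ : ((ℤ × ℤ) → EReal) → ((ℤ × ℤ) → ℝ),
      ∀ (Ω : Type) [MeasurableSpace Ω] (P : Measure Ω),
        IsProbabilityMeasure P →
        ∀ (X : ℤ × ℤ → Ω → ℝ) (μ : Measure ℝ), IsProbabilityMeasure μ →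
          (∀ u, Measurable (X u)) →
          iIndepFun X P →
          (∀ u, Measure.map (X u) P = μ) →
          Integrable (fun x : ℝ => x) μ →
          P {ω | Ψ (PhiMap (fun v => X v ω)) =
                 fun u => X u ω - ∫ x, x ∂μ} = 1 := by
  refine ⟨S19.Psi, ?_⟩
  intro Ω _ P hP X μ hμ hX hIndep hmap hInt
  haveI := hP
  haveI := hμ
  exact S19.final P hP X μ hμ hX hIndep hmap hInt
end
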